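/- arXiv:2311.06171 — 3 statements merged into one kernel-verified Lean document; each statement's English description precedes it below -/
import Mathlib

section
/- Let G = (V,E) be a finite graph and let μ be the Ising measure μ(σ) ∝ exp( Σ_{(u,v)∈E} J_{uv} σ_u σ_v + Σ_{u∈V} h_u σ_u ) on {-1,+1}^V with nonnegative couplings J_{uv} ≥ 0 and arbitrary external field h ∈ ℝ^V. Then for any two subsets of vertices Δ ⊂ Δ' ⊆ V, d_TV( μ(σ_Δ ∈ · | σ_{∂Δ'} = +), μ(σ_Δ ∈ · | σ_{∂Δ'} = −) ) ≤ Σ_{v∈Δ} d_TV( μ(σ_v ∈ · | σ_{∂Δ'} = +), μ(σ_v ∈ · | σ_{∂Δ'} = −) ), where ∂Δ' is the exterior vertex boundary of Δ' in G and + (resp. −) denotes the all-plus (resp. all-minus) configuration on ∂Δ'. -/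
open scoped BigOperators
open MeasureTheory ProbabilityTheory

noncomputable section
open scoped Classical

namespace RFIM

/-- A site of the lattice `ℤ^d`. -/
abbrev Site (d : ℕ) := Fin d → ℤ

/-- ℓ∞ distance on `ℤ^d`. -/
def distInf {d : ℕ} (x y : Site d) : ℕ :=
  Finset.univ.sup fun i => (x i - y i).natAbs

/-- Nearest-neighbour adjacency on `ℤ^d` (ℓ¹ distance one). -/
def Adj {d : ℕ} (x y : Site d) : Prop := (∑ i, (x i - y i).natAbs) = 1

/-- Closed ℓ∞ ball of radius `r` about `o`, as a finite set of sites. -/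
def ball {d : ℕ} (o : Site d) (r : ℕ) : Finset (Site d) :=
  Fintype.piFinset fun i => Finset.Icc (o i - (r : ℤ)) (o i + (r : ℤ))

/-- The box `Λ_n = [-n,n]^d ∩ ℤ^d`. -/
def box (d n : ℕ) : Finset (Site d) := ball (fun _ => 0) n

/-- Exterior vertex boundary of `A` inside `Λ`. -/
def bdryIn {d : ℕ} (Λ A : Finset (Site d)) : Finset (Site d) :=
  (Λ \ A).filter fun v => ∃ u ∈ A, Adj u v

/-- Exterior vertex boundary of `A` in all of `ℤ^d`. -/
def bdry {d : ℕ} (A : Finset (Site d)) : Finset (Site d) :=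
  (A.biUnion fun u => ball u 1).filter fun v => v ∉ A ∧ ∃ u ∈ A, Adj u v

/-- Ising configurations on a finite set of sites. -/
abbrev Conf {d : ℕ} (A : Finset (Site d)) := ↥A → Bool

/-- The spin value (±1) of a Boolean. -/
def spin (b : Bool) : ℝ := if b then 1 else -1

/-- Energy (negated Hamiltonian) of the RFIM on `A` at inverse temperature `β`, external
field `h`, with boundary condition `τ` on the set `bd`. -/
def energy {d : ℕ} (β : ℝ) (h : Site d → ℝ) (A bd : Finset (Site d)) (τ : Site d → Bool)
    (σ : Conf A) : ℝ :=
  β / 2 * ∑ u : A, ∑ v : A, (if Adj u.1 v.1 then spin (σ u) * spin (σ v) else 0)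
    + β * ∑ u : A, ∑ v ∈ bd, (if Adj u.1 v then spin (σ u) * spin (τ v) else 0)
    + ∑ u : A, h u.1 * spin (σ u)

/-- The RFIM Gibbs measure on `A` with boundary condition `τ` on `bd`, as a density. -/
def gibbs {d : ℕ} (β : ℝ) (h : Site d → ℝ) (A bd : Finset (Site d)) (τ : Site d → Bool) :
    Conf A → ℝ :=
  fun σ => Real.exp (energy β h A bd τ σ) / ∑ σ' : Conf A, Real.exp (energy β h A bd τ σ')

/-- The RFIM measure on `A` with free boundary condition. -/
def gibbsFree {d : ℕ} (β : ℝ) (h : Site d → ℝ) (A : Finset (Site d)) : Conf A → ℝ :=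
  gibbs β h A ∅ fun _ => true

/-- Probability that the spin at `o` equals `+1` under the density `p`. -/
def probPlusAt {d : ℕ} {A : Finset (Site d)} (p : Conf A → ℝ) (o : Site d) : ℝ :=
  if ho : o ∈ A then ∑ σ : Conf A, (if σ ⟨o, ho⟩ = true then p σ else 0) else 0

/-- Total variation distance between the single-site marginals at `o` of `p` and `q`. -/
def tvAt {d : ℕ} {A : Finset (Site d)} (p q : Conf A → ℝ) (o : Site d) : ℝ :=
  |probPlusAt p o - probPlusAt q o|

/-- Total variation distance between two densities on a finite space. -/
def tvDist {X : Type*} [Fintype X] (p q : X → ℝ) : ℝ := 1 / 2 * ∑ x, |p x - q x|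

/-- Mean of `φ` under the density `p`. -/
def expectVal {X : Type*} [Fintype X] (p φ : X → ℝ) : ℝ := ∑ x, p x * φ x

/-- Variance of `φ` under the density `p`. -/
def varOf {X : Type*} [Fintype X] (p φ : X → ℝ) : ℝ :=
  expectVal p (fun x => φ x ^ 2) - expectVal p φ ^ 2

/-- Squared oscillation of `φ`. -/
def osc {X : Type*} [Fintype X] [Nonempty X] (φ : X → ℝ) : ℝ :=
  ((⨆ x, φ x) - ⨅ x, φ x) ^ 2

/-- The Dirichlet form of single-site Glauber dynamics for the density `p`. -/
def dirichlet {d : ℕ} {A : Finset (Site d)} (p φ : Conf A → ℝ) : ℝ :=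
  1 / 2 * ∑ σ : Conf A, ∑ σ' : Conf A,
    (if (Finset.univ.filter fun u : ↥A => σ u ≠ σ' u).card = 1 then
      p σ * p σ' / (p σ + p σ') * (φ σ - φ σ') ^ 2 else 0)

/-- The spectral gap of Glauber dynamics for the density `p`. -/
def gap {d : ℕ} {A : Finset (Site d)} (p : Conf A → ℝ) : ℝ :=
  sInf {r : ℝ | ∃ φ : Conf A → ℝ, varOf p φ ≠ 0 ∧ r = dirichlet p φ / varOf p φ}

/-- Conditional probability of spin `b` at `u`, given all other spins of `σ`. -/
def condProb {d : ℕ} {A : Finset (Site d)} (p : Conf A → ℝ) (σ : Conf A) (u : ↥A) (b : Bool) :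
    ℝ :=
  p (Function.update σ u b) / (p (Function.update σ u true) + p (Function.update σ u false))

/-- Generator of continuous-time single-site Glauber dynamics, as a matrix. -/
def generator {d : ℕ} {A : Finset (Site d)} (p : Conf A → ℝ) : Matrix (Conf A) (Conf A) ℝ :=
  Matrix.of fun σ σ' =>
    ∑ u : ↥A,
      ((if σ' = Function.update σ u true then condProb p σ u true else 0)
        + (if σ' = Function.update σ u false then condProb p σ u false else 0)
        - (if σ' = σ then 1 else 0))

/-- The continuous-time Glauber semigroup `P_t = e^{tL}`. -/
def heatSG {d : ℕ} {A : Finset (Site d)} (p : Conf A → ℝ) (t : ℝ) :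
    Matrix (Conf A) (Conf A) ℝ :=
  Matrix.of fun σ σ' => ∑' k : ℕ, t ^ k / (Nat.factorial k : ℝ) * (generator p ^ k) σ σ'

/-- Action of the Glauber semigroup on a test function. -/
def Ptfun {d : ℕ} {A : Finset (Site d)} (p : Conf A → ℝ) (t : ℝ) (φ : Conf A → ℝ) :
    Conf A → ℝ :=
  (heatSG p t).mulVec φ

/-- The (1/4)-total-variation mixing time of continuous-time Glauber dynamics. -/
def mixingTime {d : ℕ} {A : Finset (Site d)} (p : Conf A → ℝ) : ℝ :=
  sInf {t : ℝ | 0 ≤ t ∧ ∀ σ : Conf A, tvDist (fun σ' => heatSG p t σ σ') p ≤ 1 / 4}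

/-- The coordinates of `h` are independent with a common distribution. -/
def IIDField {d : ℕ} {Ω : Type*} [MeasurableSpace Ω] (P : Measure Ω)
    (h : Ω → Site d → ℝ) : Prop :=
  (∀ x, Measurable fun ω => h ω x) ∧
  iIndepFun (fun x ω => h ω x) P ∧
  ∀ x y, IdentDistrib (fun ω => h ω x) (fun ω => h ω y) P P

/-- The coordinates of `h` are i.i.d. with a symmetric distribution. -/
def IIDSymField {d : ℕ} {Ω : Type*} [MeasurableSpace Ω] (P : Measure Ω)
    (h : Ω → Site d → ℝ) : Prop :=
  IIDField P h ∧ ∀ x, IdentDistrib (fun ω => h ω x) (fun ω => -h ω x) P P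

/-- The absolute values of the coordinates of `h` are i.i.d. (signs may be dependent). -/
def IIDAbsField {d : ℕ} {Ω : Type*} [MeasurableSpace Ω] (P : Measure Ω)
    (h : Ω → Site d → ℝ) : Prop :=
  (∀ x, Measurable fun ω => h ω x) ∧
  iIndepFun (fun x ω => |h ω x|) P ∧
  ∀ x y, IdentDistrib (fun ω => |h ω x|) (fun ω => |h ω y|) P P

/-- Weak spatial mixing in expectation, `WSM(C)`, for the RFIM on `Λ`. -/
def WSM {d : ℕ} (β : ℝ) (Λ : Finset (Site d)) {Ω : Type*} [MeasurableSpace Ω]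
    (P : Measure Ω) (h : Ω → Site d → ℝ) (C : ℝ) : Prop :=
  ∀ o ∈ Λ, ∀ r : ℕ, 1 ≤ r →
    (∫ ω, tvAt (gibbs β (h ω) (ball o r ∩ Λ) (bdryIn Λ (ball o r ∩ Λ)) fun _ => true)
               (gibbs β (h ω) (ball o r ∩ Λ) (bdryIn Λ (ball o r ∩ Λ)) fun _ => false) o ∂P)
      ≤ C * Real.exp (-(r : ℝ) / C)

/-- The boundary condition agreeing with `ξ` off `z` and taking value `b` at `z`. -/
def extendBC {d : ℕ} (z : Site d) (ξ : Site d → Bool) (b : Bool) : Site d → Bool :=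
  fun x => if x = z then b else ξ x

/-- Strong spatial mixing in expectation, `SSM(C)`, for the RFIM. -/
def SSM {d : ℕ} (β : ℝ) {Ω : Type*} [MeasurableSpace Ω] (P : Measure Ω)
    (h : Ω → Site d → ℝ) (C : ℝ) : Prop :=
  ∀ r : ℕ, 1 ≤ r → ∀ w : Site d, (∀ i, w i ∈ Finset.Ioo (-(r : ℤ)) (r : ℤ)) →
    ∀ z ∈ bdry (ball w r),
      (∫ ω, (⨆ ξ : Site d → Bool,
        tvAt (gibbs β (h ω) (ball w r) (bdry (ball w r)) (extendBC z ξ true))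
             (gibbs β (h ω) (ball w r) (bdry (ball w r)) (extendBC z ξ false)) fun _ => 0) ∂P)
        ≤ C * Real.exp (-(distInf (fun _ => 0) z : ℝ) / C)

/-- `ρ(β,d,K)`. -/
def rhoK (d : ℕ) (β K : ℝ) : ℝ :=
  Real.exp (2 * d * β - K) / (Real.exp (2 * d * β - K) + Real.exp (-(2 * d * β) + K))

/-- The single-site distribution with external field `η`. -/
def sdist (η : ℝ) (b : Bool) : ℝ := Real.exp (η * spin b) / (Real.exp η + Real.exp (-η))

/-- Energy of the RFIM restricted to the sub-domain `D` of `A` (free boundary on `D`). -/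
def energyOn {d : ℕ} (β : ℝ) (h : Site d → ℝ) (A D : Finset (Site d)) (σ : Conf A) : ℝ :=
  β / 2 * ∑ u : A, ∑ v : A,
      (if u.1 ∈ D ∧ v.1 ∈ D ∧ Adj u.1 v.1 then spin (σ u) * spin (σ v) else 0)
    + ∑ u : A, (if u.1 ∈ D then h u.1 * spin (σ u) else 0)

/-- Unnormalized weight of the RFIM on `D ⊆ A` with free boundary, embedded in `Conf A` by
freezing all spins outside `D` to `+1`. -/
def stageWeight {d : ℕ} (β : ℝ) (h : Site d → ℝ) (A D : Finset (Site d)) (σ : Conf A) : ℝ :=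
  if ∀ u : ↥A, u.1 ∉ D → σ u = true then Real.exp (energyOn β h A D σ) else 0

/-- The RFIM measure on `D ⊆ A` with free boundary, embedded in `Conf A`. -/
def stageMeas {d : ℕ} (β : ℝ) (h : Site d → ℝ) (A D : Finset (Site d)) : Conf A → ℝ :=
  fun σ => stageWeight β h A D σ / ∑ σ' : Conf A, stageWeight β h A D σ'

/-- One step of discrete-time Glauber dynamics for `p`, updating a uniformly chosen
vertex of `D`. -/
def glauberStepOn {d : ℕ} {A : Finset (Site d)} (p : Conf A → ℝ) (D : Finset (Site d)) :
    Matrix (Conf A) (Conf A) ℝ :=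
  Matrix.of fun σ σ' => 1 / (D.card : ℝ) * ∑ u : ↥A,
    (if u.1 ∈ D then
      (if σ' = Function.update σ u true then condProb p σ u true else 0)
      + (if σ' = Function.update σ u false then condProb p σ u false else 0)
     else 0)

/-- One step of discrete-time single-site Glauber dynamics for a density `π` on `V → Bool`:
a uniformly chosen vertex is resampled from the conditional distribution. -/
def glauberStep {V : Type*} [Fintype V] [DecidableEq V] (π : (V → Bool) → ℝ) :
    Matrix (V → Bool) (V → Bool) ℝ :=
  Matrix.of fun σ σ' => 1 / (Fintype.card V : ℝ) * ∑ v : V,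
    ((if σ' = Function.update σ v true then
        π (Function.update σ v true)
          / (π (Function.update σ v true) + π (Function.update σ v false)) else 0)
     + (if σ' = Function.update σ v false then
        π (Function.update σ v false)
          / (π (Function.update σ v true) + π (Function.update σ v false)) else 0))

/-- The domain consisting of the first `i` vertices of the enumeration `v`. -/
def prefDom {d : ℕ} (v : ℕ → Site d) (i : ℕ) : Finset (Site d) := (Finset.range i).image v

/-- Extension of a law `p` by an independent spin at `w` with field `η`. -/
def extendStep {d : ℕ} {A : Finset (Site d)} (w : Site d) (η : ℝ) (p : Conf A → ℝ) :
    Conf A → ℝ :=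
  fun σ => if hw : w ∈ A then p (Function.update σ ⟨w, hw⟩ true) * sdist η (σ ⟨w, hw⟩) else p σ

/-- The law of the iterative sampling algorithm after stage `i+1` (domains grow one vertex
at a time along the enumeration `v`; each stage runs `k` steps of Glauber dynamics on the
current domain; spins outside the current domain are frozen to `+1`). -/
def algLaw {d : ℕ} (n : ℕ) (β : ℝ) (h : Site d → ℝ) (v : ℕ → Site d) (k : ℕ) :
    ℕ → Conf (box d n) → ℝ
  | 0 => fun σ => ∏ u : ↥(box d n),
      (if u.1 = v 0 then sdist (h u.1) (σ u) else if σ u = true then 1 else 0)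
  | (i + 1) =>
      Matrix.vecMul (extendStep (v (i + 1)) (h (v (i + 1))) (algLaw n β h v k i))
        (glauberStepOn (stageMeas β h (box d n) (prefDom v (i + 2))) (prefDom v (i + 2)) ^ k)

/-- The collection `Q_n` of cube-like domains. -/
def Qcoll (d n : ℕ) : Set (Finset (Site d)) :=
  {Λ | Λ ⊆ box d n ∧ ∃ r : ℕ, r ≤ n - 1 ∧ ∃ A : Finset (Site d),
    Λ = ball (fun _ => 0) r ∪ (bdry (ball (fun _ => 0) r) ∩ A)}

/-- Adjacency of open sites in the percolation configuration `w`. -/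
def openAdj {d : ℕ} (w : Site d → Bool) (x y : Site d) : Prop :=
  Adj x y ∧ w x = true ∧ w y = true

/-- The open cluster of `x` in `w` has at least `r` vertices. -/
def clusterAtLeast {d : ℕ} (w : Site d → Bool) (x : Site d) (r : ℕ) : Prop :=
  ∃ S : Finset (Site d), w x = true ∧
    (∀ y ∈ S, Relation.ReflTransGen (openAdj w) x y) ∧ r ≤ S.card

/-- `ω^i = ω^h ∨ η` : the union of the weak-field sites and the Bernoulli noise. -/
def omI {d : ℕ} (K : ℝ) (f : Site d → ℝ) (e : Site d → Bool) : Site d → Bool :=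
  fun x => if |f x| ≤ K then true else e x

/-- `η` is an i.i.d. Bernoulli(ρ) field. -/
def BernoulliField {d : ℕ} {Ω' : Type*} [MeasurableSpace Ω'] (P' : Measure Ω')
    (η : Ω' → Site d → Bool) (ρ : ℝ) : Prop :=
  (∀ x, Measurable fun ω => η ω x) ∧
  iIndepFun (fun x ω => η ω x) P' ∧
  ∀ x, P' {ω | η ω x = true} = ENNReal.ofReal ρ

/-- The coarse-grained lattice `Λ_n^{(R)} = Λ_n ∩ R·ℤ^d`. -/
def coarse (d n R : ℕ) : Finset (Site d) :=
  (box d n).filter fun v => ∀ i, (R : ℤ) ∣ v i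

/-- A coarse-graining vertex `v` is `Good` (anti-concentrated-field version): conditionally
on `ω^h`, clusters of `ω^i = ω^h ∨ η` near `v` have exponential tails. -/
def GoodAnti {d : ℕ} (n R : ℕ) (K : ℝ) {Ω' : Type*} [MeasurableSpace Ω'] (P' : Measure Ω')
    (η : Ω' → Site d → Bool) (f : Site d → ℝ) (v : Site d) : Prop :=
  ∀ w ∈ ball v R ∩ box d n, ∀ r : ℕ,
    Real.log R ^ 2 ≤ (r : ℝ) → (r : ℝ) ≤ (R : ℝ) / 8 →
    P' {ω' | clusterAtLeast (omI K f (η ω')) w r} ≤ ENNReal.ofReal (Real.exp (-(r : ℝ)))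

/-- A coarse-graining vertex `v` is `Good` (SSM version). -/
def GoodSSM {d : ℕ} (n R : ℕ) (Cstar β : ℝ) (f : Site d → ℝ) (v : Site d) : Prop :=
  ∀ w ∈ ball v R ∩ box d n, ∀ ℓ r : ℕ,
    Real.log R ^ 2 ≤ (ℓ : ℝ) → ℓ ≤ 2 * r → (2 * r : ℝ) ≤ (R : ℝ) / 4 →
    ∀ a : Site d, (∀ i, a i ∈ Finset.Ioo (-(r : ℤ)) (r : ℤ)) →
    ∀ z ∈ bdry (ball (w + a) r), distInf w z = ℓ →
      (⨆ ξ : Site d → Bool,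
        tvAt (gibbs β f (ball (w + a) r) (bdry (ball (w + a) r)) (extendBC z ξ true))
             (gibbs β f (ball (w + a) r) (bdry (ball (w + a) r)) (extendBC z ξ false)) w)
        ≤ Real.exp (-(ℓ : ℝ) / Cstar)

/-- One step of the `R-*`-adjacency walk inside `S`. -/
def RstarStep {d : ℕ} (R : ℕ) (S : Finset (Site d)) (x y : Site d) : Prop :=
  x ∈ S ∧ y ∈ S ∧ distInf x y = R

/-- The `R-*`-connected component of `w` inside `S` (empty if `w ∉ S`). -/
def componentOf {d : ℕ} (R : ℕ) (S : Finset (Site d)) (w : Site d) : Finset (Site d) :=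
  S.filter fun x => w ∈ S ∧ Relation.ReflTransGen (RstarStep R S) w x

/-- `B_C`: vertices of `Λ_n` within distance `R` of the component `C0` and at distance at
least `R/2` from the good set. -/
def BCblock {d : ℕ} (n R : ℕ) (GoodS C0 : Finset (Site d)) : Finset (Site d) :=
  (box d n).filter fun x => (∃ y ∈ C0, distInf x y ≤ R) ∧ ∀ g ∈ GoodS, R / 2 ≤ distInf x g

/-- Shifts `a ∈ {-R/8, …, R/8}^d`. -/
def shifts (d R : ℕ) : Finset (Site d) :=
  Fintype.piFinset fun _ => Finset.Icc (-(R / 8 : ℕ) : ℤ) ((R / 8 : ℕ) : ℤ)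

/-- Index set of type-1 blocks: centers within distance `3R/4` of the good set. -/
def type1Idx {d : ℕ} (n R : ℕ) (GoodS : Finset (Site d)) : Finset (Site d) :=
  (box d n).filter fun w => ∃ g ∈ GoodS, distInf w g ≤ 3 * R / 4

/-- The type-1 block centered at `w`. -/
def type1Block {d : ℕ} (n R : ℕ) (w : Site d) : Finset (Site d) :=
  ball w (R / 8) ∩ box d n

/-- Index set of type-2 blocks: a bad component together with a shift. -/
def type2Idx {d : ℕ} (n R : ℕ) (BadS : Finset (Site d)) :
    Finset (Finset (Site d) × Site d) :=
  (BadS.image fun w => componentOf R BadS w) ×ˢ shifts d R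

/-- The type-2 block indexed by a component and a shift. -/
def type2Block {d : ℕ} (n R : ℕ) (GoodS : Finset (Site d)) (c : Finset (Site d) × Site d) :
    Finset (Site d) :=
  ((BCblock n R GoodS c.1).image fun x => x + c.2) ∩ box d n

/-- Membership in the collection of blocks constructed from `GoodS` and `BadS`. -/
def IsBlock {d : ℕ} (n R : ℕ) (GoodS BadS : Finset (Site d)) (B : Finset (Site d)) : Prop :=
  (∃ w ∈ type1Idx n R GoodS, B = type1Block (d := d) n R w) ∨
  (∃ c ∈ type2Idx n R BadS, B = type2Block n R GoodS c)

/-- Heat-bath resampling kernel of the block `B` for the measure `p` on `Conf A`. -/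
def blockKernel {d : ℕ} {A : Finset (Site d)} (p : Conf A → ℝ) (B : Finset (Site d)) :
    Matrix (Conf A) (Conf A) ℝ :=
  Matrix.of fun σ σ' =>
    if ∀ u : ↥A, u.1 ∉ B → σ' u = σ u then
      p σ' / ∑ τ : Conf A, (if ∀ u : ↥A, u.1 ∉ B → τ u = σ u then p τ else 0)
    else 0

/-- Dirichlet form of the continuous-time dynamics driven by the resampling kernel `Kmat`. -/
def kernelDirichlet {d : ℕ} {A : Finset (Site d)} (p : Conf A → ℝ)
    (Kmat : Matrix (Conf A) (Conf A) ℝ) (φ : Conf A → ℝ) : ℝ :=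
  1 / 2 * ∑ σ : Conf A, ∑ σ' : Conf A, p σ * Kmat σ σ' * (φ σ - φ σ') ^ 2

/-- Hamming distance between two configurations. -/
def hamming {d : ℕ} {A : Finset (Site d)} (σ σ' : Conf A) : ℕ :=
  (Finset.univ.filter fun u : ↥A => σ u ≠ σ' u).card

/-- The event (as a finset of configurations) that all spins on `bd` take the value `b`. -/
def pinEvent {d : ℕ} (Λ : Finset (Site d)) (bd : Finset (Site d)) (b : Bool) :
    Finset (Conf Λ) :=
  Finset.univ.filter fun σ => ∀ u : ↥Λ, u.1 ∈ bd → σ u = b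

/-- Conditional probability that the spin at `u` is `+1`, given the event `E`. -/
def condPlusProb {d : ℕ} {Λ : Finset (Site d)} (p : Conf Λ → ℝ) (E : Finset (Conf Λ))
    (u : ↥Λ) : ℝ :=
  (∑ σ ∈ E, (if σ u = true then p σ else 0)) / ∑ σ ∈ E, p σ

/-- `δ_0(v,ℓ)`: influence of the boundary of `B_ℓ(v)` on the spin at `v`. -/
def delta0 {d : ℕ} (β : ℝ) (h : Site d → ℝ) (Λ : Finset (Site d)) (v : Site d) (ℓ : ℕ) : ℝ :=
  tvAt (gibbs β h (ball v ℓ ∩ Λ) (bdryIn Λ (ball v ℓ ∩ Λ)) fun _ => true)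
       (gibbs β h (ball v ℓ ∩ Λ) (bdryIn Λ (ball v ℓ ∩ Λ)) fun _ => false) v

/-- Ising measure on a finite graph `G` with couplings `J` and external field `h`. -/
def isingGraph {V : Type*} [Fintype V] (G : SimpleGraph V) (J : V → V → ℝ) (h : V → ℝ) :
    (V → Bool) → ℝ :=
  fun σ =>
    Real.exp (1 / 2 * ∑ u, ∑ v, (if G.Adj u v then J u v * spin (σ u) * spin (σ v) else 0)
        + ∑ u, h u * spin (σ u))
      / ∑ σ' : V → Bool,
        Real.exp (1 / 2 * ∑ u, ∑ v, (if G.Adj u v then J u v * spin (σ' u) * spin (σ' v) else 0)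
          + ∑ u, h u * spin (σ' u))

/-- Exterior vertex boundary of `A` in the graph `G`. -/
def graphBdry {V : Type*} [Fintype V] (G : SimpleGraph V) (A : Finset V) : Finset V :=
  Finset.univ.filter fun v => v ∉ A ∧ ∃ u ∈ A, G.Adj u v

/-- The event that all spins on `bd` take the value `b`. -/
def pinEventG {V : Type*} [Fintype V] (bd : Finset V) (b : Bool) : Finset (V → Bool) :=
  Finset.univ.filter fun σ => ∀ v ∈ bd, σ v = b

/-- Conditional marginal on `Δ`, given the event `E`. -/
def condMargG {V : Type*} [Fintype V] (p : (V → Bool) → ℝ) (E : Finset (V → Bool))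
    (Δ : Finset V) : (↥Δ → Bool) → ℝ :=
  fun τ => (∑ σ ∈ E, (if ∀ w : ↥Δ, σ w.1 = τ w then p σ else 0)) / ∑ σ ∈ E, p σ

/-- Conditional marginal of the single spin at `v`, given the event `E`. -/
def condMargAtG {V : Type*} [Fintype V] (p : (V → Bool) → ℝ) (E : Finset (V → Bool))
    (v : V) : Bool → ℝ :=
  fun b => (∑ σ ∈ E, (if σ v = b then p σ else 0)) / ∑ σ ∈ E, p σ


section Aux8
set_option linter.unusedSectionVars false

variable {V : Type} [Fintype V]

def mass (a : (V → Bool) → ℝ) : ℝ := ∑ σ, a σ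
def num1 (a : (V → Bool) → ℝ) (v : V) : ℝ := ∑ σ, if σ v = true then a σ else 0
def pp (a : (V → Bool) → ℝ) (v : V) : ℝ := num1 a v / mass a
def numA (a : (V → Bool) → ℝ) (Δ : Finset V) (τ : V → Bool) : ℝ :=
  ∑ σ, if (∀ w ∈ Δ, σ w = τ w) then a σ else 0
def rr (a : (V → Bool) → ℝ) (Δ : Finset V) (τ : V → Bool) : ℝ := numA a Δ τ / mass a
def TT (Δ : Finset V) : Finset (V → Bool) := Finset.univ.filter fun τ => ∀ w ∉ Δ, τ w = true
def CLC (a b : (V → Bool) → ℝ) : Prop := ∀ σ τ, a σ * b τ ≤ a (σ ⊓ τ) * b (σ ⊔ τ)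
def cut (a : (V → Bool) → ℝ) (v : V) (x : Bool) : (V → Bool) → ℝ :=
  fun σ => if σ v = x then a σ else 0

lemma holley_pp (a b : (V → Bool) → ℝ) (ha : 0 ≤ a) (hb : 0 ≤ b) (hab : CLC a b)
    (hma : 0 < mass a) (hmb : 0 < mass b) (μ : (V → Bool) → ℝ) (hμ0 : 0 ≤ μ)
    (hμ : Monotone μ) :
    (∑ σ, μ σ * a σ) / mass a ≤ (∑ σ, μ σ * b σ) / mass b := by
  have key := holley (fun σ => a σ / mass a) (fun σ => b σ / mass b) μ hμ0
    (fun σ => div_nonneg (ha σ) hma.le) (fun σ => div_nonneg (hb σ) hmb.le) hμ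
    (by rw [show (∑ σ : V → Bool, a σ / mass a) = (∑ σ : V → Bool, a σ) / mass a from
            (Finset.sum_div ..).symm,
          show (∑ σ : V → Bool, b σ / mass b) = (∑ σ : V → Bool, b σ) / mass b from
            (Finset.sum_div ..).symm]
        rw [show (∑ σ : V → Bool, a σ) = mass a from rfl,
            show (∑ σ : V → Bool, b σ) = mass b from rfl,
            div_self hma.ne', div_self hmb.ne'])
    (fun σ τ => by
      rw [div_mul_div_comm, div_mul_div_comm]
      exact div_le_div_of_nonneg_right (hab σ τ) (by positivity) |>.trans_eq rfl)
  calc (∑ σ, μ σ * a σ) / mass a = ∑ σ : V → Bool, μ σ * (a σ / mass a) := by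
        rw [Finset.sum_div]; exact Finset.sum_congr rfl fun σ _ => by ring
    _ ≤ ∑ σ : V → Bool, μ σ * (b σ / mass b) := key
    _ = (∑ σ, μ σ * b σ) / mass b := by
        rw [Finset.sum_div]; exact Finset.sum_congr rfl fun σ _ => by ring

lemma pp_le_pp (a b : (V → Bool) → ℝ) (ha : 0 ≤ a) (hb : 0 ≤ b) (hab : CLC a b)
    (hma : 0 < mass a) (hmb : 0 < mass b) (v : V) : pp a v ≤ pp b v := by
  have := holley_pp a b ha hb hab hma hmb (fun σ => if σ v = true then 1 else 0)
    (fun σ => by positivity)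
    (fun σ τ hστ => by
      dsimp only
      by_cases h : σ v = true
      · simp [h, (hστ v) h]
      · simp only [h, if_false]; positivity)
  simpa [pp, num1, ite_mul, one_mul, zero_mul] using this

lemma cut_nonneg {a : (V → Bool) → ℝ} (ha : 0 ≤ a) (v : V) (x : Bool) : 0 ≤ cut a v x := by
  intro σ; dsimp [cut]; split
  · exact ha σ
  · exact le_rfl

lemma mass_cut_add (a : (V → Bool) → ℝ) (v : V) :
    mass (cut a v true) + mass (cut a v false) = mass a := by
  rw [mass, mass, mass, ← Finset.sum_add_distrib]
  refine Finset.sum_congr rfl fun σ _ => ?_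
  by_cases h : σ v = true <;> simp [cut, h]

lemma num1_eq_mass_cut (a : (V → Bool) → ℝ) (v : V) : num1 a v = mass (cut a v true) := rfl

lemma CLC_cut {a b : (V → Bool) → ℝ} (ha : 0 ≤ a) (hb : 0 ≤ b) (hab : CLC a b) (v : V)
    {x y : Bool} (hxy : x ≤ y) : CLC (cut a v x) (cut b v y) := by
  intro σ τ
  show (if σ v = x then a σ else 0) * (if τ v = y then b τ else 0) ≤
    (if (σ ⊓ τ) v = x then a (σ ⊓ τ) else 0) * (if (σ ⊔ τ) v = y then b (σ ⊔ τ) else 0)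
  have hR : (0:ℝ) ≤ (if (σ ⊓ τ) v = x then a (σ ⊓ τ) else 0) *
      (if (σ ⊔ τ) v = y then b (σ ⊔ τ) else 0) := by
    apply mul_nonneg
    · split
      · exact ha _
      · exact le_rfl
    · split
      · exact hb _
      · exact le_rfl
  by_cases hσ : σ v = x
  · by_cases hτ : τ v = y
    · have h1 : (σ ⊓ τ) v = x := by
        show σ v ⊓ τ v = x
        rw [hσ, hτ]; exact inf_eq_left.mpr hxy
      have h2 : (σ ⊔ τ) v = y := by
        show σ v ⊔ τ v = y
        rw [hσ, hτ]; exact sup_eq_right.mpr hxy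
      rw [if_pos hσ, if_pos hτ, if_pos h1, if_pos h2]; exact hab σ τ
    · rw [if_neg hτ, mul_zero]; exact hR
  · rw [if_neg hσ, zero_mul]; exact hR

lemma numA_cut (a : (V → Bool) → ℝ) {v : V} {Δ : Finset V} (hv : v ∉ Δ) (x : Bool)
    (τ : V → Bool) :
    numA (cut a v x) Δ τ = numA a (insert v Δ) (Function.update τ v x) := by
  refine Finset.sum_congr rfl fun σ _ => ?_
  show (if ∀ w ∈ Δ, σ w = τ w then (if σ v = x then a σ else 0) else 0) = _
  by_cases hc : ∀ w ∈ Δ, σ w = τ w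
  · rw [if_pos hc]
    by_cases hσv : σ v = x
    · rw [if_pos hσv, if_pos]
      intro w hw
      rcases Finset.mem_insert.mp hw with rfl | hwΔ
      · rw [Function.update_self]; exact hσv
      · rw [Function.update_of_ne (by rintro rfl; exact hv hwΔ)]; exact hc w hwΔ
    · rw [if_neg hσv, if_neg]
      intro hall
      exact hσv (by simpa using hall v (Finset.mem_insert_self v Δ))
  · rw [if_neg hc, if_neg]
    intro hall
    refine hc fun w hw => ?_
    have := hall w (Finset.mem_insert_of_mem hw)
    rwa [Function.update_of_ne (by rintro rfl; exact hv hw)] at this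


lemma mem_TT {Δ : Finset V} {τ : V → Bool} : τ ∈ TT Δ ↔ ∀ w ∉ Δ, τ w = true := by
  simp [TT]

lemma top_mem_TT {Δ : Finset V} : (fun _ => true) ∈ TT Δ := mem_TT.mpr fun _ _ => rfl

lemma update_mem_TT_insert {Δ : Finset V} {τ : V → Bool} (hτ : τ ∈ TT Δ) (v : V) (x : Bool) :
    Function.update τ v x ∈ TT (insert v Δ) := by
  rw [mem_TT] at hτ ⊢
  intro w hw
  rw [Finset.mem_insert, not_or] at hw
  rw [Function.update_of_ne hw.1]
  exact hτ w hw.2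

lemma TT_val_of_not_mem {Δ : Finset V} {τ : V → Bool} (hτ : τ ∈ TT Δ) {v : V} (hv : v ∉ Δ) :
    τ v = true := mem_TT.mp hτ v hv

lemma TT_split {v : V} {Δ : Finset V} (hv : v ∉ Δ) (F : (V → Bool) → ℝ) :
    ∑ τ ∈ TT (insert v Δ), F τ = ∑ τ ∈ TT Δ, (F τ + F (Function.update τ v false)) := by
  rw [← Finset.sum_filter_add_sum_filter_not (TT (insert v Δ)) (fun τ => τ v = true) F,
    Finset.sum_add_distrib]
  congr 1
  · apply Finset.sum_congr _ (fun _ _ => rfl)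
    ext τ
    simp only [Finset.mem_filter, mem_TT]
    constructor
    · rintro ⟨h1, h2⟩ w hw
      by_cases hwv : w = v
      · subst hwv; exact h2
      · exact h1 w (by simp [hwv, hw])
    · intro h1
      refine ⟨fun w hw => ?_, h1 v hv⟩
      rw [Finset.mem_insert, not_or] at hw
      exact h1 w hw.2
  · refine Finset.sum_nbij' (fun τ => Function.update τ v true)
      (fun τ => Function.update τ v false) ?_ ?_ ?_ ?_ ?_
    · intro τ hτ
      simp only [Finset.mem_filter, mem_TT] at hτ
      rw [mem_TT]
      intro w hw
      show Function.update τ v true w = true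
      by_cases hwv : w = v
      · subst hwv; rw [Function.update_self]
      · rw [Function.update_of_ne hwv]
        exact hτ.1 w (by simp [hwv, hw])
    · intro τ hτ
      simp only [Finset.mem_filter, mem_TT] at hτ ⊢
      constructor
      · intro w hw
        show Function.update τ v false w = true
        by_cases hwv : w = v
        · subst hwv; simp at hw
        · rw [Function.update_of_ne hwv]
          exact hτ w (fun hmem => hw (Finset.mem_insert_of_mem hmem))
      · show ¬ Function.update τ v false v = true
        rw [Function.update_self]; simp
    · intro τ hτ
      simp only [Finset.mem_filter] at hτ
      have h3 : τ v = false := (Bool.not_eq_true _).mp hτ.2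
      show Function.update (Function.update τ v true) v false = τ
      funext w
      by_cases hwv : w = v
      · subst hwv
        rw [Function.update_self]
        simp [h3]
      · rw [Function.update_of_ne hwv, Function.update_of_ne hwv]
    · intro τ hτ
      have h4 : τ v = true := TT_val_of_not_mem hτ hv
      show Function.update (Function.update τ v false) v true = τ
      funext w
      by_cases hwv : w = v
      · subst hwv
        rw [Function.update_self]
        simp [h4]
      · rw [Function.update_of_ne hwv, Function.update_of_ne hwv]
    · intro τ hτ
      simp only [Finset.mem_filter] at hτ
      have h3 : τ v = false := (Bool.not_eq_true _).mp hτ.2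
      show F τ = F (Function.update (Function.update τ v true) v false)
      congr 1
      funext w
      by_cases hwv : w = v
      · subst hwv
        rw [Function.update_self]
        exact h3
      · rw [Function.update_of_ne hwv, Function.update_of_ne hwv]

lemma numA_le_mass {a : (V → Bool) → ℝ} (ha : 0 ≤ a) (Δ : Finset V) (τ : V → Bool) :
    numA a Δ τ ≤ mass a := by
  refine Finset.sum_le_sum fun σ _ => ?_
  split
  · exact le_rfl
  · exact ha σ

lemma numA_sum_TT (a : (V → Bool) → ℝ) (Δ : Finset V) :
    ∑ τ ∈ TT Δ, numA a Δ τ = mass a := by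
  rw [show (∑ τ ∈ TT Δ, numA a Δ τ)
      = ∑ σ : V → Bool, ∑ τ ∈ TT Δ, (if ∀ w ∈ Δ, σ w = τ w then a σ else 0) from
    Finset.sum_comm]
  refine Finset.sum_congr rfl fun σ _ => ?_
  rw [Finset.sum_eq_single_of_mem (fun w => if w ∈ Δ then σ w else true)
    (mem_TT.mpr fun w hw => by simp [hw])]
  · rw [if_pos fun w hw => by simp [hw]]
  · intro τ hτ hne
    rw [if_neg]
    intro hagree
    apply hne
    funext w
    by_cases hw : w ∈ Δ
    · rw [← hagree w hw]; simp [hw]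
    · rw [TT_val_of_not_mem hτ hw]; simp [hw]

lemma num1_cut_add (a : (V → Bool) → ℝ) (v u : V) :
    num1 (cut a v true) u + num1 (cut a v false) u = num1 a u := by
  rw [num1, num1, num1, ← Finset.sum_add_distrib]
  refine Finset.sum_congr rfl fun σ _ => ?_
  by_cases hu : σ u = true
  · by_cases hvv : σ v = true <;> simp [cut, hu, hvv]
  · simp [cut, hu]

lemma numA_nonneg {a : (V → Bool) → ℝ} (ha : 0 ≤ a) (Δ : Finset V) (τ : V → Bool) :
    0 ≤ numA a Δ τ := by
  apply Finset.sum_nonneg; intro σ _; split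
  · exact ha σ
  · exact le_rfl

lemma mass_nonneg {a : (V → Bool) → ℝ} (ha : 0 ≤ a) : 0 ≤ mass a :=
  Finset.sum_nonneg fun σ _ => ha σ

lemma rr_nonneg {a : (V → Bool) → ℝ} (ha : 0 ≤ a) (Δ : Finset V) (τ : V → Bool) :
    0 ≤ rr a Δ τ := div_nonneg (numA_nonneg ha Δ τ) (mass_nonneg ha)

lemma num1_nonneg {a : (V → Bool) → ℝ} (ha : 0 ≤ a) (v : V) : 0 ≤ num1 a v := by
  apply Finset.sum_nonneg; intro σ _; split
  · exact ha σ
  · exact le_rfl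

lemma num1_le_mass {a : (V → Bool) → ℝ} (ha : 0 ≤ a) (v : V) : num1 a v ≤ mass a := by
  refine Finset.sum_le_sum fun σ _ => ?_
  split
  · exact le_rfl
  · exact ha σ

lemma pp_nonneg {a : (V → Bool) → ℝ} (ha : 0 ≤ a) (v : V) : 0 ≤ pp a v :=
  div_nonneg (num1_nonneg ha v) (mass_nonneg ha)

lemma pp_le_one {a : (V → Bool) → ℝ} (ha : 0 ≤ a) (hma : 0 < mass a) (v : V) :
    pp a v ≤ 1 := (div_le_one hma).mpr (num1_le_mass ha v)

lemma abs_decomp (A B p q : ℝ) (hp : 0 ≤ p) (hB : 0 ≤ B) :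
    |A * p - B * q| ≤ |A - B| * p + B * |p - q| := by
  have h : A * p - B * q = (A - B) * p + B * (p - q) := by ring
  rw [h]
  refine (abs_add_le _ _).trans ?_
  rw [abs_mul, abs_mul, abs_of_nonneg hp, abs_of_nonneg hB]

lemma sum_rr_TT {a : (V → Bool) → ℝ} (hma : 0 < mass a) (Δ : Finset V) :
    ∑ τ ∈ TT Δ, rr a Δ τ = 1 := by
  rw [show (∑ τ ∈ TT Δ, rr a Δ τ) = (∑ τ ∈ TT Δ, numA a Δ τ) / mass a from by
      rw [Finset.sum_div]
      exact Finset.sum_congr rfl fun τ _ => rfl, numA_sum_TT, div_self hma.ne']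

lemma htot {c : (V → Bool) → ℝ} (hmc : 0 < mass c) (v : V)
    (hct : 0 < mass (cut c v true)) (hcf : 0 < mass (cut c v false)) (u : V) :
    (mass (cut c v true) / mass c) * pp (cut c v true) u
      + (mass (cut c v false) / mass c) * pp (cut c v false) u = pp c u := by
  rw [pp, pp, pp, ← num1_cut_add c v u]
  field_simp

lemma rr_decomp {c : (V → Bool) → ℝ} (hmc : 0 < mass c) {v : V} {Δ : Finset V} (hv : v ∉ Δ)
    (x : Bool) (hcx : 0 < mass (cut c v x)) (τ : V → Bool) :
    rr c (insert v Δ) (Function.update τ v x)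
      = (mass (cut c v x) / mass c) * rr (cut c v x) Δ τ := by
  rw [rr, rr, ← numA_cut c hv x τ]
  field_simp

lemma main_ind (Δ : Finset V) (a b : (V → Bool) → ℝ) (ha : 0 ≤ a) (hb : 0 ≤ b)
    (haa : CLC a a) (hab : CLC a b) (hbb : CLC b b)
    (hpa : ∀ τ ∈ TT Δ, 0 < numA a Δ τ) (hpb : ∀ τ ∈ TT Δ, 0 < numA b Δ τ) :
    ∑ τ ∈ TT Δ, |rr a Δ τ - rr b Δ τ| ≤ 2 * ∑ v ∈ Δ, (pp b v - pp a v) := by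
  induction Δ using Finset.induction_on generalizing a b with
  | empty =>
    have hma : 0 < mass a := (hpa _ top_mem_TT).trans_le (numA_le_mass ha _ _)
    have hmb : 0 < mass b := (hpb _ top_mem_TT).trans_le (numA_le_mass hb _ _)
    have hz : ∀ τ ∈ TT (∅ : Finset V), |rr a ∅ τ - rr b ∅ τ| = 0 := by
      intro τ _
      have h1 : rr a ∅ τ = 1 := by
        rw [rr, show numA a ∅ τ = mass a from by simp [numA, mass], div_self hma.ne']
      have h2 : rr b ∅ τ = 1 := by
        rw [rr, show numA b ∅ τ = mass b from by simp [numA, mass], div_self hmb.ne']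
      rw [h1, h2]; simp
    rw [Finset.sum_congr rfl hz]
    simp
  | @insert v Δ hv ih =>
    have hma : 0 < mass a := (hpa _ top_mem_TT).trans_le (numA_le_mass ha _ _)
    have hmb : 0 < mass b := (hpb _ top_mem_TT).trans_le (numA_le_mass hb _ _)
    have hposa : ∀ x : Bool, ∀ τ ∈ TT Δ, 0 < numA (cut a v x) Δ τ := by
      intro x τ hτ
      rw [numA_cut a hv x τ]
      exact hpa _ (update_mem_TT_insert hτ v x)
    have hposb : ∀ x : Bool, ∀ τ ∈ TT Δ, 0 < numA (cut b v x) Δ τ := by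
      intro x τ hτ
      rw [numA_cut b hv x τ]
      exact hpb _ (update_mem_TT_insert hτ v x)
    have hmat : ∀ x, 0 < mass (cut a v x) := fun x =>
      (hposa x _ top_mem_TT).trans_le (numA_le_mass (cut_nonneg ha v x) _ _)
    have hmbt : ∀ x, 0 < mass (cut b v x) := fun x =>
      (hposb x _ top_mem_TT).trans_le (numA_le_mass (cut_nonneg hb v x) _ _)
    have IH : ∀ x, ∑ τ ∈ TT Δ, |rr (cut a v x) Δ τ - rr (cut b v x) Δ τ|
        ≤ 2 * ∑ u ∈ Δ, (pp (cut b v x) u - pp (cut a v x) u) := fun x =>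
      ih (cut a v x) (cut b v x) (cut_nonneg ha v x) (cut_nonneg hb v x)
        (CLC_cut ha ha haa v le_rfl) (CLC_cut ha hb hab v le_rfl)
        (CLC_cut hb hb hbb v le_rfl) (hposa x) (hposb x)
    set At := mass (cut a v true) / mass a with hAt
    set Af := mass (cut a v false) / mass a with hAf
    set Bt := mass (cut b v true) / mass b with hBt
    set Bf := mass (cut b v false) / mass b with hBf
    have hAt_pp : At = pp a v := rfl
    have hBt_pp : Bt = pp b v := rfl
    have hAf_eq : Af = 1 - At := by
      rw [hAf, hAt, eq_sub_iff_add_eq, ← add_div, add_comm, mass_cut_add,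
        div_self hma.ne']
    have hBf_eq : Bf = 1 - Bt := by
      rw [hBf, hBt, eq_sub_iff_add_eq, ← add_div, add_comm, mass_cut_add,
        div_self hmb.ne']
    have hpale : pp a v ≤ pp b v := pp_le_pp a b ha hb hab hma hmb v
    have hBt0 : 0 ≤ Bt := by rw [hBt_pp]; exact pp_nonneg hb v
    have hBf0 : 0 ≤ Bf := by
      rw [hBf_eq, sub_nonneg, hBt_pp]; exact pp_le_one hb hmb v
    have hterm : ∀ τ ∈ TT Δ,
        |rr a (insert v Δ) τ - rr b (insert v Δ) τ|
          + |rr a (insert v Δ) (Function.update τ v false)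
              - rr b (insert v Δ) (Function.update τ v false)|
        ≤ (|At - Bt| * rr (cut a v true) Δ τ
            + Bt * |rr (cut a v true) Δ τ - rr (cut b v true) Δ τ|)
          + (|Af - Bf| * rr (cut a v false) Δ τ
            + Bf * |rr (cut a v false) Δ τ - rr (cut b v false) Δ τ|) := by
      intro τ hτ
      have hupd : Function.update τ v true = τ := by
        funext w
        by_cases hwv : w = v
        · subst hwv; rw [Function.update_self, TT_val_of_not_mem hτ hv]
        · rw [Function.update_of_ne hwv]
      have e1 : rr a (insert v Δ) τ = At * rr (cut a v true) Δ τ := by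
        conv_lhs => rw [← hupd]
        exact rr_decomp hma hv true (hmat true) τ
      have e2 : rr b (insert v Δ) τ = Bt * rr (cut b v true) Δ τ := by
        conv_lhs => rw [← hupd]
        exact rr_decomp hmb hv true (hmbt true) τ
      have e3 : rr a (insert v Δ) (Function.update τ v false)
          = Af * rr (cut a v false) Δ τ := rr_decomp hma hv false (hmat false) τ
      have e4 : rr b (insert v Δ) (Function.update τ v false)
          = Bf * rr (cut b v false) Δ τ := rr_decomp hmb hv false (hmbt false) τ
      rw [e1, e2, e3, e4]
      exact add_le_add
        (abs_decomp At Bt _ _ (rr_nonneg (cut_nonneg ha v true) Δ τ) hBt0)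
        (abs_decomp Af Bf _ _ (rr_nonneg (cut_nonneg ha v false) Δ τ) hBf0)
    have habsT : |At - Bt| = pp b v - pp a v := by
      rw [hAt_pp, hBt_pp, abs_sub_comm, abs_of_nonneg (sub_nonneg.mpr hpale)]
    have habsF : |Af - Bf| = pp b v - pp a v := by
      rw [hAf_eq, hBf_eq, hAt_pp, hBt_pp]
      rw [show (1 - pp a v) - (1 - pp b v) = pp b v - pp a v by ring,
        abs_of_nonneg (sub_nonneg.mpr hpale)]
    calc ∑ τ ∈ TT (insert v Δ), |rr a (insert v Δ) τ - rr b (insert v Δ) τ|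
        = ∑ τ ∈ TT Δ, (|rr a (insert v Δ) τ - rr b (insert v Δ) τ|
          + |rr a (insert v Δ) (Function.update τ v false)
              - rr b (insert v Δ) (Function.update τ v false)|) := TT_split hv _
      _ ≤ ∑ τ ∈ TT Δ, ((|At - Bt| * rr (cut a v true) Δ τ
            + Bt * |rr (cut a v true) Δ τ - rr (cut b v true) Δ τ|)
          + (|Af - Bf| * rr (cut a v false) Δ τ
            + Bf * |rr (cut a v false) Δ τ - rr (cut b v false) Δ τ|)) :=
        Finset.sum_le_sum hterm
      _ = |At - Bt| * (∑ τ ∈ TT Δ, rr (cut a v true) Δ τ)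
          + Bt * (∑ τ ∈ TT Δ, |rr (cut a v true) Δ τ - rr (cut b v true) Δ τ|)
          + |Af - Bf| * (∑ τ ∈ TT Δ, rr (cut a v false) Δ τ)
          + Bf * (∑ τ ∈ TT Δ, |rr (cut a v false) Δ τ - rr (cut b v false) Δ τ|) := by
        simp only [Finset.sum_add_distrib, Finset.mul_sum]
        ring
      _ ≤ (pp b v - pp a v) + Bt * (2 * ∑ u ∈ Δ, (pp (cut b v true) u - pp (cut a v true) u))
          + (pp b v - pp a v)
          + Bf * (2 * ∑ u ∈ Δ, (pp (cut b v false) u - pp (cut a v false) u)) := by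
        rw [habsT, habsF, sum_rr_TT (hmat true), sum_rr_TT (hmat false), mul_one]
        have t1 := mul_le_mul_of_nonneg_left (IH true) hBt0
        have t2 := mul_le_mul_of_nonneg_left (IH false) hBf0
        linarith
      _ ≤ (pp b v - pp a v) + (pp b v - pp a v)
          + 2 * ∑ u ∈ Δ, (pp b u - pp a u) := by
        have key : Bt * (∑ u ∈ Δ, (pp (cut b v true) u - pp (cut a v true) u))
            + Bf * (∑ u ∈ Δ, (pp (cut b v false) u - pp (cut a v false) u))
            ≤ ∑ u ∈ Δ, (pp b u - pp a u) := by
          rw [Finset.mul_sum, Finset.mul_sum, ← Finset.sum_add_distrib]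
          refine Finset.sum_le_sum fun u _ => ?_
          have hbtot := htot hmb v (hmbt true) (hmbt false) u
          have hatot := htot hma v (hmat true) (hmat false) u
          have hmono : pp (cut a v false) u ≤ pp (cut a v true) u :=
            pp_le_pp _ _ (cut_nonneg ha v false) (cut_nonneg ha v true)
              (CLC_cut ha ha haa v (by exact Bool.false_le true)) (hmat false) (hmat true) u
          rw [← hBt, ← hBf] at hbtot
          rw [← hAt, ← hAf] at hatot
          rw [hAf_eq] at hatot
          rw [hBf_eq] at hbtot ⊢
          have hprod : 0 ≤ (Bt - At) * (pp (cut a v true) u - pp (cut a v false) u) := by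
            rw [hAt_pp, hBt_pp]
            exact mul_nonneg (sub_nonneg.mpr hpale) (sub_nonneg.mpr hmono)
          nlinarith [hprod, hAf_eq, hBf_eq, hbtot, hatot]
        linarith
      _ = 2 * ∑ u ∈ insert v Δ, (pp b u - pp a u) := by
        rw [Finset.sum_insert hv]; ring

lemma spin_supermod (a b c d : Bool) :
    spin a * spin b + spin c * spin d
      ≤ spin (a ⊓ c) * spin (b ⊓ d) + spin (a ⊔ c) * spin (b ⊔ d) := by
  cases a <;> cases b <;> cases c <;> cases d <;> norm_num [spin]

lemma spin_modular (a c : Bool) : spin (a ⊓ c) + spin (a ⊔ c) = spin a + spin c := by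
  cases a <;> cases c <;> norm_num [spin]

def ham (G : SimpleGraph V) (J : V → V → ℝ) (h : V → ℝ) (σ : V → Bool) : ℝ :=
  1 / 2 * ∑ u, ∑ v, (if G.Adj u v then J u v * spin (σ u) * spin (σ v) else 0)
    + ∑ u, h u * spin (σ u)

def wt (G : SimpleGraph V) (J : V → V → ℝ) (h : V → ℝ) (σ : V → Bool) : ℝ :=
  Real.exp (ham G J h σ)

lemma wt_pos (G : SimpleGraph V) (J : V → V → ℝ) (h : V → ℝ) (σ : V → Bool) :
    0 < wt G J h σ := Real.exp_pos _

lemma isingGraph_eq_wt (G : SimpleGraph V) (J : V → V → ℝ) (h : V → ℝ) (σ : V → Bool) :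
    isingGraph G J h σ = wt G J h σ / mass (wt G J h) := rfl

lemma mass_wt_pos (G : SimpleGraph V) (J : V → V → ℝ) (h : V → ℝ) :
    0 < mass (wt G J h) :=
  Finset.sum_pos (fun σ _ => wt_pos G J h σ) Finset.univ_nonempty

lemma ham_supermod (G : SimpleGraph V) (J : V → V → ℝ) (hJ : ∀ u v, 0 ≤ J u v)
    (h : V → ℝ) (σ τ : V → Bool) :
    ham G J h σ + ham G J h τ ≤ ham G J h (σ ⊓ τ) + ham G J h (σ ⊔ τ) := by
  have hfield : ∑ u, h u * spin ((σ ⊓ τ) u) + ∑ u, h u * spin ((σ ⊔ τ) u)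
      = ∑ u, h u * spin (σ u) + ∑ u, h u * spin (τ u) := by
    rw [← Finset.sum_add_distrib, ← Finset.sum_add_distrib]
    refine Finset.sum_congr rfl fun u _ => ?_
    have hsm := spin_modular (σ u) (τ u)
    show h u * spin (σ u ⊓ τ u) + h u * spin (σ u ⊔ τ u) = _
    calc h u * spin (σ u ⊓ τ u) + h u * spin (σ u ⊔ τ u)
        = h u * (spin (σ u ⊓ τ u) + spin (σ u ⊔ τ u)) := by ring
      _ = h u * (spin (σ u) + spin (τ u)) := by rw [hsm]
      _ = h u * spin (σ u) + h u * spin (τ u) := by ring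
  have hpair : (∑ u, ∑ v, (if G.Adj u v then J u v * spin (σ u) * spin (σ v) else 0))
      + (∑ u, ∑ v, (if G.Adj u v then J u v * spin (τ u) * spin (τ v) else 0))
      ≤ (∑ u, ∑ v, (if G.Adj u v then J u v * spin ((σ ⊓ τ) u) * spin ((σ ⊓ τ) v) else 0))
      + (∑ u, ∑ v, (if G.Adj u v then J u v * spin ((σ ⊔ τ) u) * spin ((σ ⊔ τ) v) else 0)) := by
    rw [← Finset.sum_add_distrib, ← Finset.sum_add_distrib]
    refine Finset.sum_le_sum fun u _ => ?_
    rw [← Finset.sum_add_distrib, ← Finset.sum_add_distrib]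
    refine Finset.sum_le_sum fun v _ => ?_
    by_cases hadj : G.Adj u v
    · rw [if_pos hadj, if_pos hadj, if_pos hadj, if_pos hadj]
      show J u v * spin (σ u) * spin (σ v) + J u v * spin (τ u) * spin (τ v)
        ≤ J u v * spin (σ u ⊓ τ u) * spin (σ v ⊓ τ v)
          + J u v * spin (σ u ⊔ τ u) * spin (σ v ⊔ τ v)
      have hkey := mul_le_mul_of_nonneg_left
        (spin_supermod (σ u) (σ v) (τ u) (τ v)) (hJ u v)
      nlinarith [hkey]
    · simp [hadj]
  rw [ham, ham, ham, ham]
  linarith [hpair, hfield]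

lemma wt_supermod (G : SimpleGraph V) (J : V → V → ℝ) (hJ : ∀ u v, 0 ≤ J u v)
    (h : V → ℝ) (σ τ : V → Bool) :
    wt G J h σ * wt G J h τ ≤ wt G J h (σ ⊓ τ) * wt G J h (σ ⊔ τ) := by
  rw [wt, wt, wt, wt, ← Real.exp_add, ← Real.exp_add, Real.exp_le_exp]
  exact ham_supermod G J hJ h σ τ

def pinwt (G : SimpleGraph V) (J : V → V → ℝ) (h : V → ℝ) (bd : Finset V) (c : Bool) :
    (V → Bool) → ℝ :=
  fun σ => if ∀ w ∈ bd, σ w = c then wt G J h σ else 0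

lemma pinwt_nonneg (G : SimpleGraph V) (J : V → V → ℝ) (h : V → ℝ) (bd : Finset V)
    (c : Bool) : 0 ≤ pinwt G J h bd c := by
  intro σ
  dsimp [pinwt]
  split
  · exact (wt_pos G J h σ).le
  · exact le_rfl

lemma CLC_pinwt (G : SimpleGraph V) (J : V → V → ℝ) (hJ : ∀ u v, 0 ≤ J u v) (h : V → ℝ)
    (bd : Finset V) {c c' : Bool} (hcc : c ≤ c') :
    CLC (pinwt G J h bd c) (pinwt G J h bd c') := by
  intro σ τ
  show (if ∀ w ∈ bd, σ w = c then wt G J h σ else 0)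
      * (if ∀ w ∈ bd, τ w = c' then wt G J h τ else 0)
    ≤ (if ∀ w ∈ bd, (σ ⊓ τ) w = c then wt G J h (σ ⊓ τ) else 0)
      * (if ∀ w ∈ bd, (σ ⊔ τ) w = c' then wt G J h (σ ⊔ τ) else 0)
  have hR : (0:ℝ) ≤ (if ∀ w ∈ bd, (σ ⊓ τ) w = c then wt G J h (σ ⊓ τ) else 0)
      * (if ∀ w ∈ bd, (σ ⊔ τ) w = c' then wt G J h (σ ⊔ τ) else 0) := by
    apply mul_nonneg
    · split
      · exact (wt_pos G J h _).le
      · exact le_rfl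
    · split
      · exact (wt_pos G J h _).le
      · exact le_rfl
  by_cases hσ : ∀ w ∈ bd, σ w = c
  · by_cases hτ : ∀ w ∈ bd, τ w = c'
    · have h1 : ∀ w ∈ bd, (σ ⊓ τ) w = c := fun w hw => by
        show σ w ⊓ τ w = c
        rw [hσ w hw, hτ w hw]
        exact inf_eq_left.mpr hcc
      have h2 : ∀ w ∈ bd, (σ ⊔ τ) w = c' := fun w hw => by
        show σ w ⊔ τ w = c'
        rw [hσ w hw, hτ w hw]
        exact sup_eq_right.mpr hcc
      rw [if_pos hσ, if_pos hτ, if_pos h1, if_pos h2]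
      exact wt_supermod G J hJ h σ τ
    · rw [if_neg hτ, mul_zero]; exact hR
  · rw [if_neg hσ, zero_mul]; exact hR

lemma numA_pinwt_pos (G : SimpleGraph V) (J : V → V → ℝ) (h : V → ℝ)
    {Δ Δ' : Finset V} (hΔ : Δ ⊆ Δ') (c : Bool) (τ : V → Bool) :
    0 < numA (pinwt G J h (graphBdry G Δ') c) Δ τ := by
  refine Finset.sum_pos' (fun σ _ => ?_)
    ⟨(fun w => if w ∈ Δ then τ w else c), Finset.mem_univ _, ?_⟩
  · split
    · exact pinwt_nonneg G J h _ c σ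
    · exact le_rfl
  · rw [if_pos (fun w hw => by simp [hw])]
    show (0:ℝ) < if ∀ w ∈ graphBdry G Δ', (if w ∈ Δ then τ w else c) = c
      then wt G J h _ else 0
    rw [if_pos]
    · exact wt_pos G J h _
    · intro w hw
      have hw' : w ∉ Δ' := (Finset.mem_filter.mp hw).2.1
      rw [if_neg (fun hmem => hw' (hΔ hmem))]

lemma sum_pinEventG (bd : Finset V) (c : Bool) (f : (V → Bool) → ℝ) :
    ∑ σ ∈ pinEventG bd c, f σ = ∑ σ : V → Bool, if ∀ w ∈ bd, σ w = c then f σ else 0 := by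
  rw [pinEventG, Finset.sum_filter]

lemma cond_pin_sum (G : SimpleGraph V) (J : V → V → ℝ) (h : V → ℝ) (bd : Finset V)
    (c : Bool) (Q : (V → Bool) → Prop) [DecidablePred Q] :
    ∑ σ ∈ pinEventG bd c, (if Q σ then isingGraph G J h σ else 0)
      = (∑ σ : V → Bool, if (∀ w ∈ bd, σ w = c) ∧ Q σ then wt G J h σ else 0)
          / mass (wt G J h) := by
  rw [sum_pinEventG, Finset.sum_div]
  refine Finset.sum_congr rfl fun σ _ => ?_
  by_cases hp : ∀ w ∈ bd, σ w = c
  · by_cases hq : Q σ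
    · rw [if_pos hp, if_pos hq, if_pos ⟨hp, hq⟩, isingGraph_eq_wt]
    · rw [if_pos hp, if_neg hq, if_neg (fun hc => hq hc.2), zero_div]
  · rw [if_neg hp, if_neg (fun hc => hp hc.1), zero_div]

lemma denom_pin (G : SimpleGraph V) (J : V → V → ℝ) (h : V → ℝ) (bd : Finset V) (c : Bool) :
    ∑ σ ∈ pinEventG bd c, isingGraph G J h σ
      = mass (pinwt G J h bd c) / mass (wt G J h) := by
  rw [sum_pinEventG]
  rw [show mass (pinwt G J h bd c)
      = ∑ σ : V → Bool, if ∀ w ∈ bd, σ w = c then wt G J h σ else 0 from rfl]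
  rw [Finset.sum_div]
  refine Finset.sum_congr rfl fun σ _ => ?_
  by_cases hp : ∀ w ∈ bd, σ w = c
  · rw [if_pos hp]
    show isingGraph G J h σ = (if ∀ w ∈ bd, σ w = c then wt G J h σ else 0) / mass (wt G J h)
    rw [if_pos hp, isingGraph_eq_wt]
  · rw [if_neg hp]
    show (0:ℝ) = (if ∀ w ∈ bd, σ w = c then wt G J h σ else 0) / mass (wt G J h)
    rw [if_neg hp, zero_div]

def extf (Δ : Finset V) (τ : ↥Δ → Bool) : V → Bool :=
  fun w => if hw : w ∈ Δ then τ ⟨w, hw⟩ else true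

lemma extf_mem_TT (Δ : Finset V) (τ : ↥Δ → Bool) : extf Δ τ ∈ TT Δ :=
  mem_TT.mpr fun w hw => by simp [extf, hw]

lemma extf_iff (Δ : Finset V) (τ : ↥Δ → Bool) (σ : V → Bool) :
    (∀ w : ↥Δ, σ w.1 = τ w) ↔ (∀ w ∈ Δ, σ w = extf Δ τ w) := by
  constructor
  · intro hh w hw
    rw [show extf Δ τ w = τ ⟨w, hw⟩ from dif_pos hw]
    exact hh ⟨w, hw⟩
  · intro hh w
    have hx := hh w.1 w.2
    rwa [show extf Δ τ w.1 = τ w from by rw [extf]; exact dif_pos w.2] at hx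

lemma condMargG_eq (G : SimpleGraph V) (J : V → V → ℝ) (h : V → ℝ) {Δ Δ' : Finset V}
    (hΔ : Δ ⊆ Δ') (c : Bool) (τ : ↥Δ → Bool) :
    condMargG (isingGraph G J h) (pinEventG (graphBdry G Δ') c) Δ τ
      = rr (pinwt G J h (graphBdry G Δ') c) Δ (extf Δ τ) := by
  have hmw := mass_wt_pos G J h
  show (∑ σ ∈ pinEventG (graphBdry G Δ') c,
      (if ∀ w : ↥Δ, σ w.1 = τ w then isingGraph G J h σ else 0))
    / (∑ σ ∈ pinEventG (graphBdry G Δ') c, isingGraph G J h σ)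
    = numA (pinwt G J h (graphBdry G Δ') c) Δ (extf Δ τ)
        / mass (pinwt G J h (graphBdry G Δ') c)
  rw [cond_pin_sum G J h (graphBdry G Δ') c (fun σ => ∀ w : ↥Δ, σ w.1 = τ w),
    denom_pin G J h (graphBdry G Δ') c]
  have hN : (∑ σ : V → Bool,
      if (∀ w ∈ graphBdry G Δ', σ w = c) ∧ (∀ w : ↥Δ, σ w.1 = τ w)
        then wt G J h σ else 0)
      = numA (pinwt G J h (graphBdry G Δ') c) Δ (extf Δ τ) := by
    refine Finset.sum_congr rfl fun σ _ => ?_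
    show _ = if ∀ w ∈ Δ, σ w = extf Δ τ w
        then (if ∀ w ∈ graphBdry G Δ', σ w = c then wt G J h σ else 0) else 0
    by_cases h1 : ∀ w ∈ graphBdry G Δ', σ w = c
    · by_cases h2 : ∀ w ∈ Δ, σ w = extf Δ τ w
      · rw [if_pos ⟨h1, (extf_iff Δ τ σ).mpr h2⟩, if_pos h2, if_pos h1]
      · rw [if_neg (fun hc => h2 ((extf_iff Δ τ σ).mp hc.2)), if_neg h2]
    · by_cases h2 : ∀ w ∈ Δ, σ w = extf Δ τ w
      · rw [if_neg (fun hc => h1 hc.1), if_pos h2, if_neg h1]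
      · rw [if_neg (fun hc => h1 hc.1), if_neg h2]
  rw [hN, div_div_div_comm, div_self hmw.ne', div_one]

lemma condMargAtG_true_eq (G : SimpleGraph V) (J : V → V → ℝ) (h : V → ℝ)
    (bd : Finset V) (c : Bool) (v : V) :
    condMargAtG (isingGraph G J h) (pinEventG bd c) v true
      = pp (pinwt G J h bd c) v := by
  have hmw := mass_wt_pos G J h
  show (∑ σ ∈ pinEventG bd c, (if σ v = true then isingGraph G J h σ else 0))
    / (∑ σ ∈ pinEventG bd c, isingGraph G J h σ)
    = num1 (pinwt G J h bd c) v / mass (pinwt G J h bd c)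
  rw [cond_pin_sum G J h bd c (fun σ => σ v = true), denom_pin G J h bd c]
  have hN : (∑ σ : V → Bool,
      if (∀ w ∈ bd, σ w = c) ∧ σ v = true then wt G J h σ else 0)
      = num1 (pinwt G J h bd c) v := by
    refine Finset.sum_congr rfl fun σ _ => ?_
    show _ = if σ v = true then (if ∀ w ∈ bd, σ w = c then wt G J h σ else 0) else 0
    by_cases h1 : ∀ w ∈ bd, σ w = c <;> by_cases h2 : σ v = true <;> simp [h1, h2]
  rw [hN, div_div_div_comm, div_self hmw.ne', div_one]

lemma condMargAtG_false_eq (G : SimpleGraph V) (J : V → V → ℝ) (h : V → ℝ)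
    (bd : Finset V) (c : Bool) (v : V) (hmp : 0 < mass (pinwt G J h bd c)) :
    condMargAtG (isingGraph G J h) (pinEventG bd c) v false
      = 1 - pp (pinwt G J h bd c) v := by
  have hmw := mass_wt_pos G J h
  show (∑ σ ∈ pinEventG bd c, (if σ v = false then isingGraph G J h σ else 0))
    / (∑ σ ∈ pinEventG bd c, isingGraph G J h σ)
    = 1 - num1 (pinwt G J h bd c) v / mass (pinwt G J h bd c)
  rw [cond_pin_sum G J h bd c (fun σ => σ v = false), denom_pin G J h bd c]
  have hN : (∑ σ : V → Bool,
      if (∀ w ∈ bd, σ w = c) ∧ σ v = false then wt G J h σ else 0)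
      = mass (pinwt G J h bd c) - num1 (pinwt G J h bd c) v := by
    rw [eq_sub_iff_add_eq, mass, num1, ← Finset.sum_add_distrib]
    refine Finset.sum_congr rfl fun σ _ => ?_
    show _ + (if σ v = true then (if ∀ w ∈ bd, σ w = c then wt G J h σ else 0) else 0)
      = (if ∀ w ∈ bd, σ w = c then wt G J h σ else 0)
    by_cases h1 : ∀ w ∈ bd, σ w = c <;> by_cases h2 : σ v = true
      <;> simp [h1, h2]
  rw [hN, div_div_div_comm, div_self hmw.ne', div_one, sub_div, div_self hmp.ne']

end Aux8

/-- for an Ising measure with nonnegative couplings on a finite graph, the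
total variation distance between the conditional marginals on `Δ` given all-plus/all-minus
boundary spins on `∂Δ'` is at most the sum over `v ∈ Δ` of the single-site total variation
distances. -/
theorem tv_subadditive_over_sites
    {V : Type} [Fintype V] (G : SimpleGraph V) (J : V → V → ℝ)
    (hJ : ∀ u v, 0 ≤ J u v) (hJsymm : ∀ u v, J u v = J v u) (h : V → ℝ)
    (Δ Δ' : Finset V) (hΔ : Δ ⊆ Δ') :
    tvDist (condMargG (isingGraph G J h) (pinEventG (graphBdry G Δ') true) Δ)
           (condMargG (isingGraph G J h) (pinEventG (graphBdry G Δ') false) Δ)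
      ≤ ∑ v ∈ Δ,
          tvDist (condMargAtG (isingGraph G J h) (pinEventG (graphBdry G Δ') true) v)
                 (condMargAtG (isingGraph G J h) (pinEventG (graphBdry G Δ') false) v) := by
  classical
  have hposA : ∀ τ : V → Bool, 0 < numA (pinwt G J h (graphBdry G Δ') false) Δ τ :=
    fun τ => numA_pinwt_pos G J h hΔ false τ
  have hposB : ∀ τ : V → Bool, 0 < numA (pinwt G J h (graphBdry G Δ') true) Δ τ :=
    fun τ => numA_pinwt_pos G J h hΔ true τ
  have han : 0 ≤ pinwt G J h (graphBdry G Δ') false := pinwt_nonneg G J h _ false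
  have hbn : 0 ≤ pinwt G J h (graphBdry G Δ') true := pinwt_nonneg G J h _ true
  have hmassA : 0 < mass (pinwt G J h (graphBdry G Δ') false) :=
    (hposA (fun _ => true)).trans_le (numA_le_mass han Δ _)
  have hmassB : 0 < mass (pinwt G J h (graphBdry G Δ') true) :=
    (hposB (fun _ => true)).trans_le (numA_le_mass hbn Δ _)
  have hCab : CLC (pinwt G J h (graphBdry G Δ') false) (pinwt G J h (graphBdry G Δ') true) :=
    CLC_pinwt G J hJ h _ (Bool.false_le true)
  have hmain := main_ind Δ (pinwt G J h (graphBdry G Δ') false)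
    (pinwt G J h (graphBdry G Δ') true) han hbn
    (CLC_pinwt G J hJ h _ le_rfl) hCab (CLC_pinwt G J hJ h _ le_rfl)
    (fun τ _ => hposA τ) (fun τ _ => hposB τ)
  have hpale : ∀ v : V, pp (pinwt G J h (graphBdry G Δ') false) v
      ≤ pp (pinwt G J h (graphBdry G Δ') true) v :=
    fun v => pp_le_pp _ _ han hbn hCab hmassA hmassB v
  have hL : tvDist
      (condMargG (isingGraph G J h) (pinEventG (graphBdry G Δ') true) Δ)
      (condMargG (isingGraph G J h) (pinEventG (graphBdry G Δ') false) Δ)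
      = 1 / 2 * ∑ τ ∈ TT Δ, |rr (pinwt G J h (graphBdry G Δ') false) Δ τ
          - rr (pinwt G J h (graphBdry G Δ') true) Δ τ| := by
    rw [tvDist]
    congr 1
    refine Finset.sum_nbij' (fun (τ : ↥Δ → Bool) => extf Δ τ)
      (fun τ (w : ↥Δ) => τ w.1) ?_ ?_ ?_ ?_ ?_
    · intro τ _
      exact extf_mem_TT Δ τ
    · intro τ _
      exact Finset.mem_univ _
    · intro τ _
      funext w
      simp [extf]
    · intro τ hτ
      funext w
      by_cases hw : w ∈ Δ
      · simp [extf, hw]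
      · show (if hw' : w ∈ Δ then τ w else true) = τ w
        rw [dif_neg hw]
        exact (TT_val_of_not_mem hτ hw).symm
    · intro τ _
      rw [condMargG_eq G J h hΔ true τ, condMargG_eq G J h hΔ false τ, abs_sub_comm]
  have hR : ∀ v ∈ Δ, tvDist
      (condMargAtG (isingGraph G J h) (pinEventG (graphBdry G Δ') true) v)
      (condMargAtG (isingGraph G J h) (pinEventG (graphBdry G Δ') false) v)
      = pp (pinwt G J h (graphBdry G Δ') true) v
        - pp (pinwt G J h (graphBdry G Δ') false) v := by
    intro v hv
    rw [tvDist, Fintype.sum_bool,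
      condMargAtG_true_eq G J h (graphBdry G Δ') true v,
      condMargAtG_true_eq G J h (graphBdry G Δ') false v,
      condMargAtG_false_eq G J h (graphBdry G Δ') true v hmassB,
      condMargAtG_false_eq G J h (graphBdry G Δ') false v hmassA]
    have hple := hpale v
    rw [abs_of_nonneg (sub_nonneg.mpr hple),
      show (1 - pp (pinwt G J h (graphBdry G Δ') true) v)
          - (1 - pp (pinwt G J h (graphBdry G Δ') false) v)
        = -(pp (pinwt G J h (graphBdry G Δ') true) v
          - pp (pinwt G J h (graphBdry G Δ') false) v) by ring,
      abs_neg, abs_of_nonneg (sub_nonneg.mpr hple)]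
    ring
  rw [hL, Finset.sum_congr rfl hR]
  linarith [hmain]


end RFIM
end
end

section
/- For every d ≥ 1 and c > 0 there exists a constant C_0 = C_0(d,c) such that for every finite Λ ⊂ Z^d and every integer p ≥ 1, Σ_{u_1,…,u_p ∈ Λ} Π_{i=2}^{p} e^{−c √(r_i)} ≤ C_0^p · p! · |Λ|, where for each tuple, r_i := (1/4) min_{j < i} d_∞(u_i, u_j) for 2 ≤ i ≤ p, and d_∞ is the ℓ∞-distance on Z^d. -/
open scoped BigOperators
open MeasureTheory ProbabilityTheory

noncomputable section
open scoped Classical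

namespace RFIM

private lemma exp_ge_quarter_sq {t : ℝ} (ht : 0 ≤ t) : t^2/4 ≤ Real.exp t := by
  have h1 := Real.add_one_le_exp (t/2)
  have h2 : Real.exp (t/2) * Real.exp (t/2) = Real.exp t := by
    rw [← Real.exp_add]; ring_nf
  nlinarith [Real.exp_pos (t/2)]

private lemma exp_ge_pow4 {t : ℝ} (ht : 0 ≤ t) : t^4/256 ≤ Real.exp t := by
  have h1 := exp_ge_quarter_sq (t := t/2) (by positivity)
  have h2 : Real.exp (t/2) * Real.exp (t/2) = Real.exp t := by
    rw [← Real.exp_add]; ring_nf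
  nlinarith [Real.exp_pos (t/2), sq_nonneg t]

private lemma summable_exp_sqrt_nat {b : ℝ} (hb : 0 < b) :
    Summable (fun n : ℕ => Real.exp (-(b * Real.sqrt n))) := by
  rw [← summable_nat_add_iff 1]
  have hs : Summable (fun n : ℕ => (256/b^4) * (1/((n:ℝ)+1)^2)) := by
    apply Summable.mul_left
    have := (summable_nat_add_iff (f := fun n : ℕ => 1/(n:ℝ)^2) 1).mpr
      (Real.summable_one_div_nat_pow.mpr one_lt_two)
    simpa using this
  apply Summable.of_nonneg_of_le (fun n => (Real.exp_pos _).le) (fun n => ?_) hs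
  have hn1 : (0:ℝ) < (n:ℝ)+1 := by positivity
  set t : ℝ := b * Real.sqrt ((n:ℝ)+1) with htdef
  have ht : 0 < t := mul_pos hb (Real.sqrt_pos.mpr hn1)
  have h4 : t^4/256 ≤ Real.exp t := exp_ge_pow4 ht.le
  have ht4 : t^4 = b^4 * ((n:ℝ)+1)^2 := by
    have hs2 : Real.sqrt ((n:ℝ)+1) ^ 2 = (n:ℝ)+1 := Real.sq_sqrt hn1.le
    calc t^4 = b^4 * (Real.sqrt ((n:ℝ)+1)^2)^2 := by ring
    _ = b^4 * ((n:ℝ)+1)^2 := by rw [hs2]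
  have key : Real.exp (-t) ≤ 256/b^4 * (1/((n:ℝ)+1)^2) := by
    rw [Real.exp_neg]
    have h256 : (0:ℝ) < t^4/256 := by positivity
    calc (Real.exp t)⁻¹ ≤ (t^4/256)⁻¹ := by
          apply inv_anti₀ h256 h4
    _ = 256/b^4 * (1/((n:ℝ)+1)^2) := by rw [ht4]; field_simp
  calc Real.exp (-(b * Real.sqrt (↑(n+1)))) = Real.exp (-t) := by push_cast; rfl
  _ ≤ _ := key

private lemma summable_exp_sqrt_int {b : ℝ} (hb : 0 < b) :
    Summable (fun k : ℤ => Real.exp (-(b * Real.sqrt k.natAbs))) := by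
  apply Summable.of_nat_of_neg <;> simpa using summable_exp_sqrt_nat hb

private lemma sum_exp_dist_le (d : ℕ) {b : ℝ} (hb : 0 < b)
    (Λ : Finset (Site d)) (x : Site d) :
    ∑ y ∈ Λ, Real.exp (-((d:ℝ) * b * Real.sqrt (distInf y x)))
      ≤ (∑' k : ℤ, Real.exp (-(b * Real.sqrt k.natAbs))) ^ d := by
  set g : ℤ → ℝ := fun k => Real.exp (-(b * Real.sqrt k.natAbs)) with hg
  set T : ℝ := ∑' k : ℤ, g k with hT
  have hgpos : ∀ k, 0 ≤ g k := fun k => (Real.exp_pos _).le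
  have h1d : ∀ (s : Finset ℤ) (m : ℤ), ∑ k ∈ s, g (k - m) ≤ T := by
    intro s m
    have himg : ∑ k ∈ s, g (k - m) = ∑ k ∈ s.image (fun k => k - m), g k := by
      rw [Finset.sum_image (fun a _ b _ h => by omega)]
    rw [himg]
    exact Summable.sum_le_tsum _ (fun k _ => hgpos k) (summable_exp_sqrt_int hb)
  have hC : ∀ y ∈ Λ, Real.exp (-((d:ℝ) * b * Real.sqrt (distInf y x)))
      ≤ ∏ i : Fin d, g (y i - x i) := by
    intro y _
    have : ∏ i : Fin d, g (y i - x i)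
        = Real.exp (∑ i : Fin d, -(b * Real.sqrt ((y i - x i).natAbs))) := by
      rw [Real.exp_sum]
    rw [this]
    apply Real.exp_le_exp.mpr
    have hterm : ∀ i : Fin d, Real.sqrt ((y i - x i).natAbs) ≤ Real.sqrt (distInf y x) := by
      intro i
      apply Real.sqrt_le_sqrt
      have h := Finset.le_sup (f := fun i => (y i - x i).natAbs) (Finset.mem_univ i)
      exact Nat.cast_le.mpr h
    have hsum : ∑ i : Fin d, Real.sqrt ((y i - x i).natAbs)
        ≤ (d:ℝ) * Real.sqrt (distInf y x) := by
      calc ∑ i : Fin d, Real.sqrt ((y i - x i).natAbs)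
          ≤ ∑ _i : Fin d, Real.sqrt (distInf y x) := Finset.sum_le_sum (fun i _ => hterm i)
      _ = (d:ℝ) * Real.sqrt (distInf y x) := by
          rw [Finset.sum_const, Finset.card_univ, Fintype.card_fin, nsmul_eq_mul]
    have : ∑ i : Fin d, -(b * Real.sqrt ((y i - x i).natAbs))
        = -(b * ∑ i : Fin d, Real.sqrt ((y i - x i).natAbs)) := by
      rw [Finset.mul_sum, ← Finset.sum_neg_distrib]
    rw [this]
    nlinarith [hb.le]
  calc ∑ y ∈ Λ, Real.exp (-((d:ℝ) * b * Real.sqrt (distInf y x)))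
      ≤ ∑ y ∈ Λ, ∏ i : Fin d, g (y i - x i) := Finset.sum_le_sum hC
  _ ≤ ∑ y ∈ Fintype.piFinset (fun i : Fin d => Λ.image (fun z => z i)),
        ∏ i : Fin d, g (y i - x i) := by
      apply Finset.sum_le_sum_of_subset_of_nonneg
      · intro y hy
        rw [Fintype.mem_piFinset]
        exact fun i => Finset.mem_image_of_mem _ hy
      · intro y _ _
        exact Finset.prod_nonneg fun i _ => hgpos _
  _ = ∏ i : Fin d, ∑ k ∈ Λ.image (fun z => z i), g (k - x i) := by
      rw [Finset.prod_univ_sum]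
  _ ≤ ∏ _i : Fin d, T := by
      apply Finset.prod_le_prod
      · exact fun i _ => Finset.sum_nonneg fun k _ => hgpos _
      · exact fun i _ => h1d _ _
  _ = T ^ d := by rw [Finset.prod_const, Finset.card_univ, Fintype.card_fin]

private lemma tuple_sum_bound {X : Type*} [Fintype X] (f : X → X → ℝ)
    (hf : ∀ a b, 0 ≤ f a b) (K : ℝ) (hK : 0 ≤ K) (hbd : ∀ x : X, ∑ y : X, f y x ≤ K) :
    ∀ p : ℕ, (∑ w : Fin (p+1) → X, ∏ i : Fin (p+1),
      (if 0 < i.1 then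
        ∑ j ∈ Finset.univ.filter (fun j : Fin (p+1) => j.1 < i.1), f (w i) (w j) else 1))
      ≤ (Nat.factorial p : ℝ) * K ^ p * (Fintype.card X : ℝ) := by
  intro p
  induction p with
  | zero =>
      have h1 : ∀ w : Fin 1 → X, (∏ i : Fin 1,
          (if 0 < i.1 then
            ∑ j ∈ Finset.univ.filter (fun j : Fin 1 => j.1 < i.1), f (w i) (w j) else 1)) = 1 := by
        intro w
        rw [Fin.prod_univ_one]
        simp
      calc (∑ w : Fin 1 → X, ∏ i : Fin 1,
          (if 0 < i.1 then
            ∑ j ∈ Finset.univ.filter (fun j : Fin 1 => j.1 < i.1), f (w i) (w j) else 1))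
          = ∑ _w : Fin 1 → X, (1:ℝ) := by
            apply Finset.sum_congr rfl; intro w _; exact h1 w
      _ = (Fintype.card X : ℝ) := by
          rw [Finset.sum_const, Finset.card_univ, nsmul_eq_mul, mul_one]
          congr 1
          simp [Fintype.card_fun]
      _ ≤ _ := by simp
  | succ p ih =>
      have reidx : ∀ (m : ℕ), m ≤ p+1 → ∀ (h : Fin (p+2) → ℝ),
          ∑ j ∈ Finset.univ.filter (fun j : Fin (p+2) => j.1 < m), h j
          = ∑ j ∈ Finset.univ.filter (fun j : Fin (p+1) => j.1 < m), h j.castSucc := by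
        intro m hm h
        rw [Finset.sum_filter, Finset.sum_filter, Fin.sum_univ_castSucc]
        simp only [Fin.coe_castSucc, Fin.val_last]
        rw [if_neg (by omega), add_zero]
      let e : ((Fin (p+1) → X) × X) ≃ (Fin (p+2) → X) :=
        { toFun := fun q => Fin.snoc q.1 q.2
          invFun := fun u => (Fin.init u, u (Fin.last (p+1)))
          left_inv := by
            intro q
            simp [Fin.init_snoc, Fin.snoc_last]
          right_inv := by
            intro u
            simp [Fin.snoc_init_self] }
      have hsnoc : ∀ (w' : Fin (p+1) → X) (x : X),
          (∏ i : Fin (p+2), (if 0 < i.1 then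
            ∑ j ∈ Finset.univ.filter (fun j : Fin (p+2) => j.1 < i.1),
              f ((Fin.snoc w' x : Fin (p+2) → X) i) ((Fin.snoc w' x : Fin (p+2) → X) j) else 1))
          = (∏ i : Fin (p+1), (if 0 < i.1 then
              ∑ j ∈ Finset.univ.filter (fun j : Fin (p+1) => j.1 < i.1), f (w' i) (w' j) else 1))
            * ∑ j : Fin (p+1), f x (w' j) := by
        intro w' x
        rw [Fin.prod_univ_castSucc]
        congr 1
        · apply Finset.prod_congr rfl
          intro i _
          simp only [Fin.coe_castSucc]
          by_cases hi : 0 < i.1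
          · rw [if_pos hi, if_pos hi, reidx i.1 (by omega)]
            apply Finset.sum_congr rfl
            intro j _
            rw [Fin.snoc_castSucc, Fin.snoc_castSucc]
          · rw [if_neg hi, if_neg hi]
        · rw [if_pos (by simp [Fin.val_last])]
          have : (Finset.univ.filter (fun j : Fin (p+2) => j.1 < (Fin.last (p+1)).1))
              = Finset.univ.filter (fun j : Fin (p+2) => j.1 < p+1) := by
            simp [Fin.val_last]
          rw [this, reidx (p+1) le_rfl]
          rw [Finset.filter_true_of_mem (fun j _ => j.isLt)]
          apply Finset.sum_congr rfl
          intro j _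
          rw [Fin.snoc_last, Fin.snoc_castSucc]
      have hP : ∀ w' : Fin (p+1) → X, (0:ℝ) ≤ ∏ i : Fin (p+1), (if 0 < i.1 then
          ∑ j ∈ Finset.univ.filter (fun j : Fin (p+1) => j.1 < i.1), f (w' i) (w' j) else 1) := by
        intro w'
        apply Finset.prod_nonneg
        intro i _
        split
        · exact Finset.sum_nonneg fun j _ => hf _ _
        · exact zero_le_one
      calc (∑ w : Fin (p+2) → X, ∏ i : Fin (p+2),
            (if 0 < i.1 then
              ∑ j ∈ Finset.univ.filter (fun j : Fin (p+2) => j.1 < i.1), f (w i) (w j) else 1))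
          = ∑ q : (Fin (p+1) → X) × X, ∏ i : Fin (p+2),
            (if 0 < i.1 then
              ∑ j ∈ Finset.univ.filter (fun j : Fin (p+2) => j.1 < i.1),
                f ((Fin.snoc q.1 q.2 : Fin (p+2) → X) i) ((Fin.snoc q.1 q.2 : Fin (p+2) → X) j) else 1) := by
            rw [← Equiv.sum_comp e]
            rfl
      _ = ∑ w' : Fin (p+1) → X, ∑ x : X,
            (∏ i : Fin (p+1), (if 0 < i.1 then
              ∑ j ∈ Finset.univ.filter (fun j : Fin (p+1) => j.1 < i.1), f (w' i) (w' j) else 1))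
            * ∑ j : Fin (p+1), f x (w' j) := by
            rw [Fintype.sum_prod_type]
            apply Finset.sum_congr rfl; intro w' _
            apply Finset.sum_congr rfl; intro x _
            exact hsnoc w' x
      _ ≤ ∑ w' : Fin (p+1) → X,
            (∏ i : Fin (p+1), (if 0 < i.1 then
              ∑ j ∈ Finset.univ.filter (fun j : Fin (p+1) => j.1 < i.1), f (w' i) (w' j) else 1))
            * ((p+1) * K) := by
            apply Finset.sum_le_sum
            intro w' _
            rw [← Finset.mul_sum]
            apply mul_le_mul_of_nonneg_left _ (hP w')
            rw [Finset.sum_comm]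
            calc ∑ j : Fin (p+1), ∑ x : X, f x (w' j)
                ≤ ∑ _j : Fin (p+1), K := Finset.sum_le_sum fun j _ => hbd (w' j)
            _ = ((p:ℝ)+1) * K := by
                rw [Finset.sum_const, Finset.card_univ, Fintype.card_fin, nsmul_eq_mul]
                push_cast; ring
      _ = (∑ w' : Fin (p+1) → X,
            ∏ i : Fin (p+1), (if 0 < i.1 then
              ∑ j ∈ Finset.univ.filter (fun j : Fin (p+1) => j.1 < i.1), f (w' i) (w' j) else 1))
            * ((p+1) * K) := by rw [← Finset.sum_mul]
      _ ≤ ((Nat.factorial p : ℝ) * K ^ p * (Fintype.card X : ℝ)) * ((p+1) * K) := by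
            apply mul_le_mul_of_nonneg_right ih
            positivity
      _ = (Nat.factorial (p+1) : ℝ) * K ^ (p+1) * (Fintype.card X : ℝ) := by
            rw [Nat.factorial_succ]
            push_cast; ring


/-- the combinatorial counting bound
`Σ_{u_1,…,u_p ∈ Λ} Π_{i≥2} e^{-c √(r_i)} ≤ C₀^p p! |Λ|`, with
`r_i = (1/4) min_{j<i} d_∞(u_i,u_j)`. -/
theorem exponential_tuple_counting (d : ℕ) (hd : 1 ≤ d) (c : ℝ) (hc : 0 < c) :
    ∃ C₀ : ℝ, 0 < C₀ ∧
      ∀ (Λ : Finset (Site d)) (p : ℕ), 1 ≤ p →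
        (∑ u ∈ Fintype.piFinset fun _ : Fin p => Λ,
          ∏ i : Fin p,
            (if hi : 0 < i.1 then
              Real.exp (-c * Real.sqrt (1 / 4 *
                ((Finset.univ.filter fun j : Fin p => j.1 < i.1).inf'
                  ⟨⟨0, i.pos⟩, Finset.mem_filter.2 ⟨Finset.mem_univ _, hi⟩⟩
                  fun j => (distInf (u i) (u j) : ℝ))))
             else 1))
          ≤ C₀ ^ p * (Nat.factorial p : ℝ) * (Λ.card : ℝ) := by
  have hd0 : (0:ℝ) < d := by exact_mod_cast hd
  set b : ℝ := c / (2*d) with hbdef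
  have hb : 0 < b := by positivity
  set T : ℝ := ∑' k : ℤ, Real.exp (-(b * Real.sqrt k.natAbs)) with hTdef
  have hT1 : 1 ≤ T := by
    have h := Summable.le_tsum (summable_exp_sqrt_int hb) 0 (fun k _ => (Real.exp_pos _).le)
    rw [hTdef]; simpa using h
  have hTd0 : (0:ℝ) ≤ T := zero_le_one.trans hT1
  have hTd1 : (1:ℝ) ≤ T ^ d := one_le_pow₀ hT1
  have hdb : (d:ℝ) * b = c/2 := by
    rw [hbdef]; field_simp
  refine ⟨T ^ d, by positivity, ?_⟩
  intro Λ p hp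
  obtain ⟨q, rfl⟩ : ∃ q, p = q + 1 := ⟨p-1, by omega⟩
  set f : ↥Λ → ↥Λ → ℝ :=
    fun y x => Real.exp (-((d:ℝ) * b * Real.sqrt (distInf (y:Site d) (x:Site d)))) with hfdef
  have hKbd : ∀ x : ↥Λ, ∑ y : ↥Λ, f y x ≤ T ^ d := by
    intro x
    have h := sum_exp_dist_le d hb Λ (x : Site d)
    rw [← hTdef] at h
    calc ∑ y : ↥Λ, f y x
        = ∑ y ∈ Λ, Real.exp (-((d:ℝ) * b * Real.sqrt (distInf y (x : Site d)))) :=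
          Finset.sum_coe_sort Λ
            (fun y => Real.exp (-((d:ℝ) * b * Real.sqrt (distInf y (x : Site d)))))
    _ ≤ T ^ d := h
  have step1 : (∑ u ∈ Fintype.piFinset fun _ : Fin (q+1) => Λ,
        ∏ i : Fin (q+1),
          (if hi : 0 < i.1 then
            Real.exp (-c * Real.sqrt (1 / 4 *
              ((Finset.univ.filter fun j : Fin (q+1) => j.1 < i.1).inf'
                ⟨⟨0, i.pos⟩, Finset.mem_filter.2 ⟨Finset.mem_univ _, hi⟩⟩
                fun j => (distInf (u i) (u j) : ℝ))))
           else 1))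
      ≤ ∑ u ∈ Fintype.piFinset (fun _ : Fin (q+1) => Λ), ∏ i : Fin (q+1),
          (if 0 < i.1 then
            ∑ j ∈ Finset.univ.filter (fun j : Fin (q+1) => j.1 < i.1),
              Real.exp (-((d:ℝ) * b * Real.sqrt (distInf (u i) (u j)))) else 1) := by
    apply Finset.sum_le_sum
    intro u hu
    apply Finset.prod_le_prod
    · intro i _
      by_cases hi : 0 < i.1
      · rw [dif_pos hi]; exact (Real.exp_pos _).le
      · rw [dif_neg hi]; exact zero_le_one
    · intro i _
      by_cases hi : 0 < i.1
      · rw [dif_pos hi, if_pos hi]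
        obtain ⟨j₀, hj₀, hinf⟩ := Finset.exists_mem_eq_inf'
          (⟨⟨0, i.pos⟩, Finset.mem_filter.2 ⟨Finset.mem_univ _, hi⟩⟩ :
            (Finset.univ.filter fun j : Fin (q+1) => j.1 < i.1).Nonempty)
          (fun j => (distInf (u i) (u j) : ℝ))
        rw [hinf]
        have hsq : Real.sqrt (1 / 4 * (distInf (u i) (u j₀) : ℝ))
            = 1/2 * Real.sqrt (distInf (u i) (u j₀)) := by
          rw [Real.sqrt_mul (by norm_num : (0:ℝ) ≤ 1/4), show Real.sqrt (1/4) = 1/2 by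
            rw [show (1/4:ℝ) = (1/2)^2 by norm_num, Real.sqrt_sq (by norm_num : (0:ℝ) ≤ 1/2)]]
        have heq : -c * Real.sqrt (1 / 4 * (distInf (u i) (u j₀) : ℝ))
            = -((d:ℝ) * b * Real.sqrt (distInf (u i) (u j₀))) := by
          rw [hsq, hdb]; ring
        rw [heq]
        exact Finset.single_le_sum
          (f := fun j => Real.exp (-((d:ℝ) * b * Real.sqrt (distInf (u i) (u j)))))
          (fun j _ => (Real.exp_pos _).le) hj₀
      · rw [dif_neg hi, if_neg hi]
  have step2 : (∑ u ∈ Fintype.piFinset (fun _ : Fin (q+1) => Λ), ∏ i : Fin (q+1),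
        (if 0 < i.1 then
          ∑ j ∈ Finset.univ.filter (fun j : Fin (q+1) => j.1 < i.1),
            Real.exp (-((d:ℝ) * b * Real.sqrt (distInf (u i) (u j)))) else 1))
      = ∑ w : Fin (q+1) → ↥Λ, ∏ i : Fin (q+1),
          (if 0 < i.1 then
            ∑ j ∈ Finset.univ.filter (fun j : Fin (q+1) => j.1 < i.1), f (w i) (w j) else 1) := by
    apply Finset.sum_bij'
      (i := fun u hu => fun k => (⟨u k, Fintype.mem_piFinset.mp hu k⟩ : ↥Λ))
      (j := fun w _ => fun k => ((w k : Site d)))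
    all_goals first
      | (intro a ha; exact Finset.mem_univ _)
      | (intro w _; rw [Fintype.mem_piFinset]; exact fun k => (w k).2)
      | (intro a ha; funext k; rfl)
      | (intro a ha; rfl)
  calc (∑ u ∈ Fintype.piFinset fun _ : Fin (q+1) => Λ,
        ∏ i : Fin (q+1),
          (if hi : 0 < i.1 then
            Real.exp (-c * Real.sqrt (1 / 4 *
              ((Finset.univ.filter fun j : Fin (q+1) => j.1 < i.1).inf'
                ⟨⟨0, i.pos⟩, Finset.mem_filter.2 ⟨Finset.mem_univ _, hi⟩⟩
                fun j => (distInf (u i) (u j) : ℝ))))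
           else 1))
      ≤ ∑ u ∈ Fintype.piFinset (fun _ : Fin (q+1) => Λ), ∏ i : Fin (q+1),
          (if 0 < i.1 then
            ∑ j ∈ Finset.univ.filter (fun j : Fin (q+1) => j.1 < i.1),
              Real.exp (-((d:ℝ) * b * Real.sqrt (distInf (u i) (u j)))) else 1) := step1
  _ = ∑ w : Fin (q+1) → ↥Λ, ∏ i : Fin (q+1),
        (if 0 < i.1 then
          ∑ j ∈ Finset.univ.filter (fun j : Fin (q+1) => j.1 < i.1), f (w i) (w j) else 1) := step2
  _ ≤ (Nat.factorial q : ℝ) * (T ^ d) ^ q * (Fintype.card ↥Λ : ℝ) :=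
      tuple_sum_bound f (fun a b => (Real.exp_pos _).le) (T ^ d) (by positivity) hKbd q
  _ ≤ (T ^ d) ^ (q+1) * (Nat.factorial (q+1) : ℝ) * (Λ.card : ℝ) := by
      rw [Fintype.card_coe]
      have h1 : ((Nat.factorial q : ℝ)) ≤ (Nat.factorial (q+1) : ℝ) := by
        exact_mod_cast Nat.factorial_le (Nat.le_succ q)
      have h2 : (T ^ d) ^ q ≤ (T ^ d) ^ (q+1) := pow_le_pow_right₀ hTd1 (Nat.le_succ q)
      have hcard : (0:ℝ) ≤ (Λ.card : ℝ) := by positivity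
      calc (Nat.factorial q : ℝ) * (T ^ d) ^ q * (Λ.card : ℝ)
          ≤ (Nat.factorial (q+1) : ℝ) * (T ^ d) ^ (q+1) * (Λ.card : ℝ) := by
            apply mul_le_mul_of_nonneg_right _ hcard
            apply mul_le_mul h1 h2 (by positivity) (by positivity)
      _ = (T ^ d) ^ (q+1) * (Nat.factorial (q+1) : ℝ) * (Λ.card : ℝ) := by ring


end RFIM
end
end

section
/- Fix d ≥ 2, β > 0, and K > 0 such that ρ = ρ(β,d,K) := e^{2dβ−K}/(e^{2dβ−K} + e^{−2dβ+K}) < 1/(40d), and suppose the field (h_x)_{x∈Λ_n} has i.i.d. absolute values with P_h(|h_x| ≤ K) < 1/(40d). Let ω^h_x = 1_{|h_x| ≤ K}, let (η_x)_{x∈Λ_n} be i.i.d. Bernoulli(ρ) independent of h, and let ω^i_x = ω^h_x ∨ η_x. Call a vertex v ∈ Λ_n^{(R)} = Λ_n ∩ R·Z^d Good if for every w in the ℓ∞-ball B_R(v) of radius R around v and every r with (log R)² ≤ r ≤ R/8, one has P( |C_w(ω^i)| ≥ r | ω^h ) ≤ e^{−r}, where C_w(ω^i) is the nearest-neighbor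 connected component of w in {x : ω^i_x = 1}; otherwise call v Bad. Then there is a constant R_0(d) such that for all R ≥ R_0(d) and every v ∈ Λ_n^{(R)}, P_h( v is Bad ) ≤ R^{−5}. -/
open scoped BigOperators
open MeasureTheory ProbabilityTheory

noncomputable section
open scoped Classical

namespace RFIM

-- geometry lemmas
lemma mem_ball_iff {d : ℕ} {o x : Site d} {r : ℕ} :
    x ∈ ball o r ↔ ∀ i, (x i - o i).natAbs ≤ r := by
  simp only [ball, Fintype.mem_piFinset, Finset.mem_Icc]
  refine forall_congr' fun i => ?_
  omega

lemma mem_ball_iff' {d : ℕ} {o x : Site d} {r : ℕ} :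
    x ∈ ball o r ↔ distInf x o ≤ r := by
  rw [mem_ball_iff, distInf]
  exact (Finset.sup_le_iff.trans (by simp)).symm

lemma distInf_triangle {d : ℕ} (x y z : Site d) :
    distInf x z ≤ distInf x y + distInf y z := by
  refine Finset.sup_le fun i _ => ?_
  calc (x i - z i).natAbs = ((x i - y i) + (y i - z i)).natAbs := by ring_nf
    _ ≤ (x i - y i).natAbs + (y i - z i).natAbs := Int.natAbs_add_le _ _
    _ ≤ _ := Nat.add_le_add
        (Finset.le_sup (f := fun i => (x i - y i).natAbs) (Finset.mem_univ i))
        (Finset.le_sup (f := fun i => (y i - z i).natAbs) (Finset.mem_univ i))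

lemma Adj.distInf_le_one {d : ℕ} {x y : Site d} (h : Adj x y) : distInf x y ≤ 1 := by
  refine Finset.sup_le fun i _ => ?_
  calc (x i - y i).natAbs ≤ ∑ j, (x j - y j).natAbs := Finset.single_le_sum (f := fun j => (x j - y j).natAbs) (fun _ _ => Nat.zero_le _) (Finset.mem_univ i)
    _ = 1 := h

/-- direction step -/
def stepD {d : ℕ} (x : Site d) (p : Fin d × Bool) : Site d :=
  fun j => if j = p.1 then x j + (if p.2 then 1 else -1) else x j

lemma stepD_eq_self_iff {d : ℕ} (x : Site d) (p : Fin d × Bool) (j : Fin d) (hj : j ≠ p.1) :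
    stepD x p j = x j := by simp [stepD, hj]

lemma adj_of_stepD {d : ℕ} (x : Site d) (p : Fin d × Bool) : Adj x (stepD x p) := by
  unfold Adj
  have h1 : ∀ j, (x j - stepD x p j).natAbs = if j = p.1 then 1 else 0 := by
    intro j
    by_cases hj : j = p.1
    · subst hj
      simp only [stepD, if_pos rfl]
      cases p.2 <;> simp
    · simp [stepD, hj]
  simp [h1]

lemma adj_exists_stepD {d : ℕ} {x y : Site d} (h : Adj x y) : ∃ p, y = stepD x p := by
  have h1 : ∃ i, (x i - y i).natAbs ≠ 0 := by
    by_contra hc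
    push_neg at hc
    have : (∑ i, (x i - y i).natAbs) = 0 := Finset.sum_eq_zero fun i _ => hc i
    rw [Adj] at h; omega
  obtain ⟨i, hi⟩ := h1
  have hzero : ∀ j, j ≠ i → (x j - y j).natAbs = 0 := by
    intro j hj
    by_contra hc
    have hpair : ∑ k ∈ ({i, j} : Finset (Fin d)), (x k - y k).natAbs
        = (x i - y i).natAbs + (x j - y j).natAbs :=
      Finset.sum_pair (f := fun k => (x k - y k).natAbs) (Ne.symm hj)
    have hsub : ∑ k ∈ ({i, j} : Finset (Fin d)), (x k - y k).natAbs
        ≤ ∑ k, (x k - y k).natAbs :=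
      Finset.sum_le_sum_of_subset (Finset.subset_univ _)
    rw [Adj] at h; omega
  have hione : (x i - y i).natAbs = 1 := by
    have hle : (x i - y i).natAbs ≤ ∑ k, (x k - y k).natAbs :=
      Finset.single_le_sum (f := fun k => (x k - y k).natAbs)
        (fun _ _ => Nat.zero_le _) (Finset.mem_univ i)
    rw [Adj] at h
    omega
  refine ⟨(i, decide (y i = x i + 1)), ?_⟩
  funext j
  by_cases hji : j = i
  · subst hji
    simp only [stepD]
    have : y j = x j + 1 ∨ y j = x j - 1 := by omega
    rcases this with h' | h' <;> simp [h'] <;> omega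
  · have := hzero j hji
    simp only [stepD]
    rw [if_neg (by simpa using hji)]
    omega

lemma stepD_inj {d : ℕ} (x : Site d) {p q : Fin d × Bool} (h : stepD x p = stepD x q) : p = q := by
  obtain ⟨i, b⟩ := p; obtain ⟨i', b'⟩ := q
  by_cases hii : i = i'
  · subst hii
    have := congrFun h i
    simp only [stepD, if_pos rfl] at this
    cases b <;> cases b' <;> simp_all <;> omega
  · exfalso
    have h1 := congrFun h i
    simp [stepD, hii] at h1
    cases b <;> simp at h1 <;> omega

/-- adjacency restricted to a finite set -/
def inStep {d : ℕ} (T : Finset (Site d)) (a b : Site d) : Prop :=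
  a ∈ T ∧ b ∈ T ∧ Adj a b

/-- connected subset rooted at w -/
def ConnSet {d : ℕ} (w : Site d) (T : Finset (Site d)) : Prop :=
  w ∈ T ∧ ∀ x ∈ T, Relation.ReflTransGen (inStep T) w x

lemma reflTransGen_mono_set {d : ℕ} {T T' : Finset (Site d)} (hTT : T ⊆ T')
    {a b : Site d} (h : Relation.ReflTransGen (inStep T) a b) :
    Relation.ReflTransGen (inStep T') a b :=
  Relation.ReflTransGen.mono (fun _ _ hx => ⟨hTT hx.1, hTT hx.2.1, hx.2.2⟩) _ _ h

/-- LEAVE: a connected walk in T₀ leaving T must cross the boundary of T. -/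
lemma leave_lemma {d : ℕ} {T₀ T : Finset (Site d)} {w y : Site d}
    (hw : w ∈ T) (hy : y ∉ T)
    (h : Relation.ReflTransGen (inStep T₀) w y) :
    ∃ a ∈ T, ∃ b ∈ T₀, b ∉ T ∧ Adj a b := by
  induction h with
  | refl => exact absurd hw hy
  | @tail m z hwm hstep ih =>
    by_cases hm : m ∈ T
    · exact ⟨m, hm, z, hstep.2.1, hy, hstep.2.2⟩
    · exact ih hm

/-- GROW: extract a connected subset of any size k ≤ |T₀|. -/
lemma grow_lemma {d : ℕ} {T₀ : Finset (Site d)} {w : Site d}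
    (hconn : ConnSet w T₀) :
    ∀ k : ℕ, 1 ≤ k → k ≤ T₀.card →
    ∃ T : Finset (Site d), T ⊆ T₀ ∧ T.card = k ∧ ConnSet w T ∧
      ∀ x ∈ T, distInf x w ≤ k - 1 := by
  intro k
  induction k with
  | zero => omega
  | succ k ih =>
    intro _ hk
    by_cases hk1 : k = 0
    · subst hk1
      refine ⟨{w}, Finset.singleton_subset_iff.2 hconn.1, Finset.card_singleton w, ⟨Finset.mem_singleton_self w, ?_⟩, ?_⟩
      · intro x hx; rw [Finset.mem_singleton] at hx; subst hx; exact Relation.ReflTransGen.refl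
      · intro x hx; rw [Finset.mem_singleton] at hx; subst hx; simp [distInf]
    · obtain ⟨T, hsub, hcard, hTconn, hdist⟩ := ih (by omega) (by omega)
      -- T ⊊ T₀, find boundary crossing
      have hne : ∃ y ∈ T₀, y ∉ T := by
        by_contra hc
        push_neg at hc
        have : T₀ ⊆ T := hc
        have := Finset.card_le_card this
        omega
      obtain ⟨y, hy₀, hyT⟩ := hne
      obtain ⟨a, haT, b, hbT₀, hbT, hab⟩ :=
        leave_lemma hTconn.1 hyT (hconn.2 y hy₀)
      refine ⟨insert b T, Finset.insert_subset hbT₀ hsub, ?_, ⟨Finset.mem_insert_of_mem hTconn.1, ?_⟩, ?_⟩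
      · rw [Finset.card_insert_of_notMem hbT]; omega
      · intro x hx
        rcases Finset.mem_insert.1 hx with hx | hx
        · rw [hx]
          exact Relation.ReflTransGen.tail
            (reflTransGen_mono_set (Finset.subset_insert b T) (hTconn.2 a haT))
            ⟨Finset.mem_insert_of_mem haT, Finset.mem_insert_self b T, hab⟩
        · exact reflTransGen_mono_set (Finset.subset_insert b T) (hTconn.2 x hx)
      · intro x hx
        rcases Finset.mem_insert.1 hx with hx | hx
        · rw [hx]
          calc distInf b w ≤ distInf b a + distInf a w := distInf_triangle b a w
            _ ≤ 1 + (k - 1) := by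
                refine Nat.add_le_add ?_ (hdist a haT)
                have h1 := hab.distInf_le_one
                have h2 : distInf b a = distInf a b := by
                  unfold distInf
                  congr 1
                  funext i
                  rw [← Int.natAbs_neg]
                  ring_nf
                omega
            _ ≤ k + 1 - 1 := by omega
        · exact le_trans (hdist x hx) (by omega)

set_option maxHeartbeats 1000000 in
/-- EXTRACT: from a large cluster, extract an animal of size exactly r in ball w r. -/
lemma extract_animal {d : ℕ} {c : Site d → Bool} {w : Site d} {r : ℕ} (hr : 1 ≤ r)
    (h : clusterAtLeast c w r) :
    ∃ T : Finset (Site d), T ⊆ ball w r ∧ T.card = r ∧ ConnSet w T ∧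
      ∀ x ∈ T, c x = true := by
  obtain ⟨S, hcw, hreach, hScard⟩ := h
  -- build T₀ from chains
  have hchains : ∀ y ∈ S, ∃ l : List (Site d),
      List.Chain (openAdj c) w l ∧ (w :: l).getLast (List.cons_ne_nil _ _) = y :=
    fun y hy => List.exists_isChain_cons_of_relationReflTransGen (hreach y hy)
  choose f hf1 hf2 using hchains
  set T₀ : Finset (Site d) :=
    S.attach.biUnion (fun y => (w :: f y.1 y.2).toFinset) with hT₀def
  have hwT₀ : w ∈ T₀ ∨ S = ∅ := by
    rcases Finset.eq_empty_or_nonempty S with he | ⟨y, hy⟩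
    · right; exact he
    · left
      exact Finset.mem_biUnion.2 ⟨⟨y, hy⟩, Finset.mem_attach _ _, by simp⟩
  have hSne : S.Nonempty := Finset.card_pos.1 (by omega)
  have hwT₀' : w ∈ T₀ := by
    rcases hwT₀ with h | h
    · exact h
    · exact absurd h (Finset.nonempty_iff_ne_empty.1 hSne)
  -- every element of T₀ open and reachable within T₀
  have hkey : ∀ y : {x // x ∈ S}, ∀ z ∈ (w :: f y.1 y.2).toFinset,
      c z = true ∧ Relation.ReflTransGen (inStep T₀) w z := by
    intro y z hz
    have hchain := hf1 y.1 y.2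
    -- induction over the chain: all prefix elements are fine
    clear hf2
    -- we prove: for every list l with Chain (openAdj c) w l and (w::l).toFinset ⊆ T₀,
    -- every z in it is open & reachable
    have main : ∀ (l : List (Site d)) (a : Site d), c a = true → a ∈ T₀ →
        Relation.ReflTransGen (inStep T₀) w a →
        List.Chain (openAdj c) a l → (∀ u ∈ l, u ∈ T₀) →
        ∀ z ∈ (a :: l), c z = true ∧ Relation.ReflTransGen (inStep T₀) w z := by
      intro l
      induction l with
      | nil =>
        intro a ha haT hreach _ _ z hz
        simp at hz; subst hz; exact ⟨ha, hreach⟩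
      | cons b l ihl =>
        intro a ha haT hreach hchain hmem z hz
        rcases List.chain_cons.1 hchain with ⟨hab, hchain'⟩
        have hbT : b ∈ T₀ := hmem b List.mem_cons_self
        have hreachb : Relation.ReflTransGen (inStep T₀) w b :=
          Relation.ReflTransGen.tail hreach ⟨haT, hbT, hab.1⟩
        rcases List.mem_cons.1 hz with hz | hz
        · subst hz; exact ⟨ha, hreach⟩
        · exact ihl b hab.2.2 hbT hreachb hchain' (fun u hu => hmem u (List.mem_cons_of_mem b hu)) z hz
      
    have hsubT₀ : ∀ u ∈ (w :: f y.1 y.2), u ∈ T₀ := by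
      intro u hu
      exact Finset.mem_biUnion.2 ⟨y, Finset.mem_attach _ _, List.mem_toFinset.2 hu⟩
    have := main (f y.1 y.2) w hcw hwT₀' Relation.ReflTransGen.refl hchain
      (fun u hu => hsubT₀ u (List.mem_cons_of_mem w hu))
    exact this z (List.mem_toFinset.1 hz)
  -- T₀ properties
  have hT₀open : ∀ z ∈ T₀, c z = true := by
    intro z hz
    obtain ⟨y, _, hzy⟩ := Finset.mem_biUnion.1 hz
    exact (hkey y z hzy).1
  have hT₀conn : ConnSet w T₀ := by
    refine ⟨hwT₀', fun z hz => ?_⟩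
    obtain ⟨y, _, hzy⟩ := Finset.mem_biUnion.1 hz
    exact (hkey y z hzy).2
  have hST₀ : S ⊆ T₀ := by
    intro y hy
    refine Finset.mem_biUnion.2 ⟨⟨y, hy⟩, Finset.mem_attach _ _, ?_⟩
    rw [List.mem_toFinset]
    have hmem := List.getLast_mem (List.cons_ne_nil w (f y hy))
    rw [hf2 y hy] at hmem
    exact hmem
  have hT₀card : r ≤ T₀.card := le_trans hScard (Finset.card_le_card hST₀)
  obtain ⟨T, hsub, hcard, hconn, hdist⟩ := grow_lemma hT₀conn r hr hT₀card
  refine ⟨T, ?_, hcard, hconn, fun x hx => hT₀open x (hsub hx)⟩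
  intro x hx
  rw [mem_ball_iff']
  exact le_trans (hdist x hx) (by omega)


/-! ### BFS encoding of lattice animals -/

/-- canonical list of directions -/
def DL (d : ℕ) : List (Fin d × Bool) := (Finset.univ : Finset (Fin d × Bool)).toList

lemma mem_DL {d : ℕ} (p : Fin d × Bool) : p ∈ DL d := by
  simp [DL, Finset.mem_toList]

lemma nodup_DL (d : ℕ) : (DL d).Nodup := Finset.nodup_toList _

/-- children directions of `v` in BFS over `T` with discovered list `L` -/
def childL {d : ℕ} (T : Finset (Site d)) (L : List (Site d)) (v : Site d) :
    List (Fin d × Bool) :=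
  (DL d).filter (fun dr => decide (stepD v dr ∈ T ∧ stepD v dr ∉ L))

/-- BFS exploration of `T` from `w` -/
def bfs {d : ℕ} (T : Finset (Site d)) (w : Site d) : ℕ → List (Site d)
  | 0 => [w]
  | (k+1) =>
    let L := bfs T w k
    if hk : k < L.length then
      L ++ (childL T L (L.get ⟨k, hk⟩)).map (stepD (L.get ⟨k, hk⟩))
    else L

lemma bfs_succ_pos {d : ℕ} (T : Finset (Site d)) (w : Site d) (k : ℕ)
    (hk : k < (bfs T w k).length) :
    bfs T w (k+1) = bfs T w k ++
      (childL T (bfs T w k) ((bfs T w k).get ⟨k, hk⟩)).map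
        (stepD ((bfs T w k).get ⟨k, hk⟩)) := by
  simp only [bfs]
  rw [dif_pos hk]

lemma bfs_succ_neg {d : ℕ} (T : Finset (Site d)) (w : Site d) (k : ℕ)
    (hk : ¬ k < (bfs T w k).length) :
    bfs T w (k+1) = bfs T w k := by
  simp only [bfs]
  rw [dif_neg hk]

lemma bfs_prefix_succ {d : ℕ} (T : Finset (Site d)) (w : Site d) (k : ℕ) :
    bfs T w k <+: bfs T w (k+1) := by
  by_cases hk : k < (bfs T w k).length
  · rw [bfs_succ_pos T w k hk]; exact List.prefix_append _ _
  · rw [bfs_succ_neg T w k hk]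

lemma bfs_prefix {d : ℕ} (T : Finset (Site d)) (w : Site d) {j k : ℕ} (hjk : j ≤ k) :
    bfs T w j <+: bfs T w k := by
  induction k with
  | zero => rw [Nat.le_zero.1 hjk]
  | succ k ih =>
    rcases Nat.lt_or_ge j (k+1) with h | h
    · exact (ih (by omega)).trans (bfs_prefix_succ T w k)
    · have : j = k + 1 := by omega
      rw [this]

lemma bfs_mem_T {d : ℕ} {T : Finset (Site d)} {w : Site d} (hw : w ∈ T) (k : ℕ) :
    ∀ x ∈ bfs T w k, x ∈ T := by
  induction k with
  | zero => intro x hx; simp only [bfs, List.mem_singleton] at hx; rwa [hx]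
  | succ k ih =>
    intro x hx
    by_cases hk : k < (bfs T w k).length
    · rw [bfs_succ_pos T w k hk] at hx
      rcases List.mem_append.1 hx with hx | hx
      · exact ih x hx
      · obtain ⟨dr, hdr, rfl⟩ := List.mem_map.1 hx
        have := List.of_mem_filter hdr
        simp only [decide_eq_true_eq] at this
        exact this.1
    · rw [bfs_succ_neg T w k hk] at hx; exact ih x hx

lemma bfs_nodup {d : ℕ} (T : Finset (Site d)) (w : Site d) (k : ℕ) :
    (bfs T w k).Nodup := by
  induction k with
  | zero => simp [bfs]
  | succ k ih =>
    by_cases hk : k < (bfs T w k).length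
    · rw [bfs_succ_pos T w k hk]
      set L := bfs T w k
      set v := L.get ⟨k, hk⟩
      refine List.Nodup.append ih ?_ ?_
      · refine (List.Nodup.filter _ (nodup_DL d)).map ?_
        intro a b hab
        exact stepD_inj v hab
      · intro x hxL hxM
        obtain ⟨dr, hdr, rfl⟩ := List.mem_map.1 hxM
        have := List.of_mem_filter hdr
        simp only [decide_eq_true_eq] at this
        exact this.2 hxL
    · rw [bfs_succ_neg T w k hk]; exact ih

lemma bfs_stall {d : ℕ} (T : Finset (Site d)) (w : Site d) {k : ℕ}
    (hk : (bfs T w k).length ≤ k) : ∀ m, k ≤ m → bfs T w m = bfs T w k := by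
  intro m hm
  induction m with
  | zero => rw [Nat.le_zero.1 hm]
  | succ m ih =>
    rcases Nat.lt_or_ge k (m+1) with h | h
    · have hmk : k ≤ m := by omega
      have heq := ih hmk
      have : ¬ m < (bfs T w m).length := by rw [heq]; omega
      rw [bfs_succ_neg T w m this, heq]
    · have : k = m + 1 := by omega
      rw [this]

lemma bfs_get_stable {d : ℕ} (T : Finset (Site d)) (w : Site d) {j k : ℕ} (hjk : j ≤ k)
    {i : ℕ} (hi : i < (bfs T w j).length) :
    (bfs T w k).get ⟨i, lt_of_lt_of_le hi (bfs_prefix T w hjk).length_le⟩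
      = (bfs T w j).get ⟨i, hi⟩ := by
  simp only [List.get_eq_getElem]
  exact ((bfs_prefix T w hjk).getElem hi).symm

/-- BFS-discovered list is closed under `T`-neighbours once all positions processed. -/
lemma bfs_closed {d : ℕ} (T : Finset (Site d)) (w : Site d) (r : ℕ)
    (hlen : (bfs T w r).length ≤ r) :
    ∀ m ∈ bfs T w r, ∀ dr, stepD m dr ∈ T → stepD m dr ∈ bfs T w r := by
  intro m hm dr hdrT
  obtain ⟨j, hj, hget⟩ := List.mem_iff_getElem.1 hm
  have hjr : j < r := lt_of_lt_of_le hj hlen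
  -- j < length (bfs T w j)
  have hjlen : j < (bfs T w j).length := by
    by_contra hc
    push_neg at hc
    have hstall := bfs_stall T w hc r (by omega)
    have hlenr : (bfs T w r).length ≤ j := by rw [hstall]; exact hc
    omega
  have hvm : (bfs T w j).get ⟨j, hjlen⟩ = m := by
    rw [← hget]
    have := bfs_get_stable T w (le_of_lt hjr) hjlen
    simp only [List.get_eq_getElem] at this ⊢
    rw [this]
  by_cases hmem : stepD m dr ∈ bfs T w j
  · exact (bfs_prefix T w (le_of_lt hjr)).subset hmem
  · have hdr : dr ∈ childL T (bfs T w j) ((bfs T w j).get ⟨j, hjlen⟩) := by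
      rw [childL, List.mem_filter]
      refine ⟨mem_DL dr, ?_⟩
      rw [hvm]
      simp [hdrT, hmem]
    have : stepD m dr ∈ bfs T w (j+1) := by
      rw [bfs_succ_pos T w j hjlen]
      refine List.mem_append.2 (Or.inr ?_)
      exact List.mem_map.2 ⟨dr, hdr, by rw [hvm]⟩
    exact (bfs_prefix T w (by omega : j+1 ≤ r)).subset this

lemma bfs_len_le {d : ℕ} {T : Finset (Site d)} {w : Site d} (hw : w ∈ T) (k : ℕ) :
    (bfs T w k).length ≤ T.card := by
  have h1 : (bfs T w k).toFinset.card = (bfs T w k).length :=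
    List.toFinset_card_of_nodup (bfs_nodup T w k)
  have h2 : (bfs T w k).toFinset ⊆ T := by
    intro x hx
    exact bfs_mem_T hw k x (List.mem_toFinset.1 hx)
  calc (bfs T w k).length = (bfs T w k).toFinset.card := h1.symm
    _ ≤ T.card := Finset.card_le_card h2

lemma bfs_complete {d : ℕ} {T : Finset (Site d)} {w : Site d} {r : ℕ}
    (hconn : ConnSet w T) (hcard : T.card = r) :
    (bfs T w r).toFinset = T := by
  have hw : w ∈ T := hconn.1
  have hlen : (bfs T w r).length ≤ r := by
    have := bfs_len_le hw r; omega
  apply Finset.Subset.antisymm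
  · intro x hx
    exact bfs_mem_T hw r x (List.mem_toFinset.1 hx)
  · intro x hxT
    have hreach := hconn.2 x hxT
    rw [List.mem_toFinset]
    clear hxT
    induction hreach with
    | refl =>
      have : w ∈ bfs T w 0 := by simp [bfs]
      exact (bfs_prefix T w (Nat.zero_le r)).subset this
    | @tail m z hwm hstep ih =>
      obtain ⟨p, rfl⟩ := adj_exists_stepD hstep.2.2
      exact bfs_closed T w r hlen m ih p hstep.2.1

lemma bfs_length_eq {d : ℕ} {T : Finset (Site d)} {w : Site d} {r : ℕ}
    (hconn : ConnSet w T) (hcard : T.card = r) :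
    (bfs T w r).length = r := by
  have h1 : (bfs T w r).toFinset.card = (bfs T w r).length :=
    List.toFinset_card_of_nodup (bfs_nodup T w r)
  rw [bfs_complete hconn hcard, hcard] at h1
  omega

/-- encoding: the children list used at step k -/
def encodeL {d : ℕ} (T : Finset (Site d)) (w : Site d) (k : ℕ) : List (Fin d × Bool) :=
  if hk : k < (bfs T w k).length then
    childL T (bfs T w k) ((bfs T w k).get ⟨k, hk⟩)
  else []

lemma bfs_succ_encode {d : ℕ} (T : Finset (Site d)) (w : Site d) (k : ℕ) :
    bfs T w (k+1) = bfs T w k ++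
      (encodeL T w k).map (stepD (if hk : k < (bfs T w k).length
        then (bfs T w k).get ⟨k, hk⟩ else w)) := by
  by_cases hk : k < (bfs T w k).length
  · have he : encodeL T w k = childL T (bfs T w k) ((bfs T w k).get ⟨k, hk⟩) := by
      unfold encodeL
      rw [dif_pos hk]
    rw [bfs_succ_pos T w k hk, he, dif_pos hk]
  · have he : encodeL T w k = [] := by
      unfold encodeL
      rw [dif_neg hk]
    rw [bfs_succ_neg T w k hk, he]
    simp

lemma bfs_length_sum {d : ℕ} (T : Finset (Site d)) (w : Site d) (r : ℕ) :
    (bfs T w r).length = 1 + ∑ k ∈ Finset.range r, (encodeL T w k).length := by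
  induction r with
  | zero => simp [bfs]
  | succ r ih =>
    rw [bfs_succ_encode T w r, List.length_append, List.length_map,
      Finset.sum_range_succ]
    omega

/-- determination: bfs is determined by the encoding -/
lemma bfs_determined {d : ℕ} (T T' : Finset (Site d)) (w : Site d) (r : ℕ)
    (henc : ∀ k < r, ∀ dr, dr ∈ encodeL T w k ↔ dr ∈ encodeL T' w k) :
    bfs T w r = bfs T' w r := by
  induction r with
  | zero => rfl
  | succ r ih =>
    have hIH : bfs T w r = bfs T' w r := ih (fun k hk => henc k (by omega))
    by_cases hk : r < (bfs T w r).length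
    · have hk' : r < (bfs T' w r).length := by rwa [← hIH]
      have hv : (bfs T' w r).get ⟨r, hk'⟩ = (bfs T w r).get ⟨r, hk⟩ :=
        (List.get_of_eq hIH ⟨r, hk⟩).symm
      have h1 : encodeL T w r = childL T (bfs T w r) ((bfs T w r).get ⟨r, hk⟩) := by
        unfold encodeL
        rw [dif_pos hk]
      have h2 : encodeL T' w r = childL T' (bfs T w r) ((bfs T w r).get ⟨r, hk⟩) := by
        unfold encodeL
        rw [dif_pos hk', hv, ← hIH]
      have hchild : childL T (bfs T w r) ((bfs T w r).get ⟨r, hk⟩)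
          = childL T' (bfs T w r) ((bfs T w r).get ⟨r, hk⟩) := by
        have hmem := henc r (by omega)
        unfold childL
        refine List.filter_congr ?_
        intro dr hdr
        have hiff := hmem dr
        rw [h1, h2] at hiff
        unfold childL at hiff
        rw [List.mem_filter, List.mem_filter] at hiff
        simp only [mem_DL, true_and] at hiff
        by_cases hp : (decide (stepD ((bfs T w r).get ⟨r, hk⟩) dr ∈ T ∧
            stepD ((bfs T w r).get ⟨r, hk⟩) dr ∉ bfs T w r)) = true
        · rw [hp, hiff.1 hp]
        · simp only [Bool.not_eq_true] at hp
          rw [hp]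
          by_cases hq : (decide (stepD ((bfs T w r).get ⟨r, hk⟩) dr ∈ T' ∧
              stepD ((bfs T w r).get ⟨r, hk⟩) dr ∉ bfs T w r)) = true
          · exfalso
            rw [hiff.2 hq] at hp
            simp at hp
          · simp only [Bool.not_eq_true] at hq
            rw [hq]
      rw [bfs_succ_pos T w r hk, bfs_succ_pos T' w r hk', hv, ← hIH, hchild]
    · have hk' : ¬ r < (bfs T' w r).length := by rwa [← hIH]
      rw [bfs_succ_neg T w r hk, bfs_succ_neg T' w r hk', hIH]

/-! ### counting animals -/

def Animals (d : ℕ) (w : Site d) (r : ℕ) : Finset (Finset (Site d)) :=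
  ((ball w r).powerset).filter (fun T => T.card = r ∧ ConnSet w T)

lemma encodeL_nodup {d : ℕ} (T : Finset (Site d)) (w : Site d) (k : ℕ) :
    (encodeL T w k).Nodup := by
  unfold encodeL
  split
  · exact List.Nodup.filter _ (nodup_DL d)
  · exact List.nodup_nil

def slotF {d : ℕ} (w : Site d) (r : ℕ) (T : Finset (Site d)) :
    Finset (Fin r × (Fin d × Bool)) :=
  Finset.univ.biUnion fun j : Fin r =>
    ((encodeL T w (j : ℕ)).toFinset).map ⟨fun dr => (j, dr), fun a b hab => by simpa using hab⟩

lemma mem_slotF {d : ℕ} {w : Site d} {r : ℕ} {T : Finset (Site d)}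
    {q : Fin r × (Fin d × Bool)} :
    q ∈ slotF w r T ↔ q.2 ∈ encodeL T w (q.1 : ℕ) := by
  unfold slotF
  rw [Finset.mem_biUnion]
  constructor
  · rintro ⟨j, _, hq⟩
    rw [Finset.mem_map] at hq
    obtain ⟨dr, hdr, rfl⟩ := hq
    exact List.mem_toFinset.1 hdr
  · intro hq
    exact ⟨q.1, Finset.mem_univ _,
      Finset.mem_map.2 ⟨q.2, List.mem_toFinset.2 hq, rfl⟩⟩

lemma card_slotF {d : ℕ} (w : Site d) (r : ℕ) (T : Finset (Site d)) :
    (slotF w r T).card = ∑ k ∈ Finset.range r, (encodeL T w k).length := by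
  unfold slotF
  rw [Finset.card_biUnion]
  · rw [← Fin.sum_univ_eq_sum_range]
    refine Finset.sum_congr rfl fun j _ => ?_
    rw [Finset.card_map, List.toFinset_card_of_nodup (encodeL_nodup T w j)]
  · intro a _ b _ hab
    simp only [Finset.disjoint_left]
    intro q hq hq'
    rw [Finset.mem_map] at hq hq'
    obtain ⟨dr, _, rfl⟩ := hq
    obtain ⟨dr', _, h⟩ := hq'
    apply hab
    have := congrArg Prod.fst h
    exact this.symm

lemma slotF_card_of_animal {d : ℕ} {w : Site d} {r : ℕ} (hr : 1 ≤ r)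
    {T : Finset (Site d)} (hcard : T.card = r) (hconn : ConnSet w T) :
    (slotF w r T).card = r - 1 := by
  rw [card_slotF]
  have h1 := bfs_length_sum T w r
  have h2 := bfs_length_eq hconn hcard
  omega

lemma animals_card_le {d : ℕ} (w : Site d) (r : ℕ) (hr : 1 ≤ r) :
    (Animals d w r).card ≤ (r * (d * 2)).choose (r - 1) := by
  have hmaps : ∀ T ∈ Animals d w r,
      slotF w r T ∈ Finset.powersetCard (r - 1) (Finset.univ : Finset (Fin r × (Fin d × Bool))) := by
    intro T hT
    rw [Animals, Finset.mem_filter] at hT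
    rw [Finset.mem_powersetCard]
    exact ⟨Finset.subset_univ _, slotF_card_of_animal hr hT.2.1 hT.2.2⟩
  have hinj : Set.InjOn (slotF w r) (Animals d w r) := by
    intro T hT T' hT' heq
    rw [Finset.mem_coe, Animals, Finset.mem_filter] at hT hT'
    have henc : ∀ k < r, ∀ dr : Fin d × Bool, dr ∈ encodeL T w k ↔ dr ∈ encodeL T' w k := by
      intro k hk dr
      have h1 := @mem_slotF d w r T (⟨k, hk⟩, dr)
      have h2 := @mem_slotF d w r T' (⟨k, hk⟩, dr)
      rw [heq] at h1
      rw [← h1, h2]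
    have hbfs := bfs_determined T T' w r henc
    have hc1 := bfs_complete hT.2.2 hT.2.1
    have hc2 := bfs_complete hT'.2.2 hT'.2.1
    rw [← hc1, ← hc2, hbfs]
  have hcard := Finset.card_le_card_of_injOn (slotF w r) hmaps hinj
  calc (Animals d w r).card
      ≤ (Finset.powersetCard (r - 1) (Finset.univ : Finset (Fin r × (Fin d × Bool)))).card := hcard
    _ = (Fintype.card (Fin r × (Fin d × Bool))).choose (r - 1) := by
        rw [Finset.card_powersetCard, Finset.card_univ]
    _ = (r * (d * 2)).choose (r - 1) := by
        rw [Fintype.card_prod, Fintype.card_prod, Fintype.card_fin, Fintype.card_fin,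
          Fintype.card_bool]

/-! ### probability estimates -/

lemma omI_eq_true_iff {d : ℕ} (K : ℝ) (f : Site d → ℝ) (e : Site d → Bool) (x : Site d) :
    omI K f e x = true ↔ (|f x| ≤ K ∨ e x = true) := by
  unfold omI
  by_cases hx : |f x| ≤ K <;> simp [hx]

/-- real-arithmetic core inequality -/
lemma real_core (d r : ℕ) (hd : 1 ≤ d) (hr : 1 ≤ r) :
    Real.exp r * ((r*(d*2)).choose (r-1) : ℝ) * (1/(20*(d:ℝ)))^r
      ≤ (Real.exp 2 / 10)^r := by
  obtain ⟨s, rfl⟩ : ∃ s, r = s + 1 := ⟨r - 1, by omega⟩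
  have hD : (1:ℝ) ≤ (d:ℝ) := by exact_mod_cast hd
  have hDpos : (0:ℝ) < (d:ℝ) := by linarith
  have hF : (0:ℝ) < (Nat.factorial s : ℝ) := by exact_mod_cast Nat.factorial_pos s
  simp only [Nat.add_sub_cancel]
  push_cast
  -- choose bound
  have hchoose : (((s+1)*(d*2)).choose s : ℝ)
      ≤ ((s+1:ℝ)*(2*(d:ℝ)))^s / (Nat.factorial s : ℝ) := by
    rw [le_div_iff₀ hF]
    have h1 : ((s+1)*(d*2)).choose s * Nat.factorial s ≤ ((s+1)*(d*2))^s := by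
      have h2 := Nat.descFactorial_le_pow ((s+1)*(d*2)) s
      rw [Nat.descFactorial_eq_factorial_mul_choose] at h2
      rw [Nat.mul_comm]
      exact h2
    have h3 : ((((s+1)*(d*2)).choose s : ℕ) : ℝ) * ((Nat.factorial s : ℕ) : ℝ)
        ≤ ((((s+1)*(d*2))^s : ℕ) : ℝ) := by exact_mod_cast h1
    calc (((s+1)*(d*2)).choose s : ℝ) * (Nat.factorial s : ℝ)
        ≤ ((((s+1)*(d*2))^s : ℕ) : ℝ) := h3
      _ = ((s+1:ℝ)*(2*(d:ℝ)))^s := by push_cast; ring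
  have hexp0 : (0:ℝ) ≤ ((s:ℝ)+1) := by positivity
  have hpow : ((s+1:ℝ))^s / (Nat.factorial s : ℝ) ≤ Real.exp ((s:ℝ)+1) := by
    have heq : ((s+1:ℝ))^s / (Nat.factorial s : ℝ)
        = ((s+1:ℝ))^(s+1) / (Nat.factorial (s+1) : ℝ) := by
      rw [Nat.factorial_succ, pow_succ]
      push_cast
      field_simp
    rw [heq]
    exact Real.pow_div_factorial_le_exp _ hexp0 (s+1)
  -- main assembling
  have hA : (((s+1)*(d*2)).choose s : ℝ)
      ≤ (2*(d:ℝ))^s * Real.exp ((s:ℝ)+1) := by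
    calc (((s+1)*(d*2)).choose s : ℝ)
        ≤ ((s+1:ℝ)*(2*(d:ℝ)))^s / (Nat.factorial s : ℝ) := hchoose
      _ = (2*(d:ℝ))^s * (((s+1:ℝ))^s / (Nat.factorial s : ℝ)) := by
          rw [mul_pow]; ring
      _ ≤ (2*(d:ℝ))^s * Real.exp ((s:ℝ)+1) := by
          refine mul_le_mul_of_nonneg_left hpow (by positivity)
  have hfrac : (2*(d:ℝ))^s * (1/(20*(d:ℝ)))^(s+1) ≤ (1/10)^(s+1) := by
    have h20 : (0:ℝ) < 20*(d:ℝ) := by linarith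
    rw [pow_succ, pow_succ, ← mul_assoc]
    refine mul_le_mul ?_ ?_ (by positivity) (by positivity)
    · have h110 : (2*(d:ℝ)) * (1/(20*(d:ℝ))) = 1/10 := by
        field_simp
        ring
      have : (2*(d:ℝ))^s * (1/(20*(d:ℝ)))^s = ((1:ℝ)/10)^s := by
        rw [← mul_pow, h110]
      rw [this]
    · rw [div_le_div_iff₀ h20 (by norm_num)]
      linarith
  calc Real.exp ((s:ℝ)+1) * (((s+1)*(d*2)).choose s : ℝ) * (1/(20*(d:ℝ)))^(s+1)
      ≤ Real.exp ((s:ℝ)+1) * ((2*(d:ℝ))^s * Real.exp ((s:ℝ)+1)) * (1/(20*(d:ℝ)))^(s+1) := by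
        refine mul_le_mul_of_nonneg_right
          (mul_le_mul_of_nonneg_left hA (le_of_lt (Real.exp_pos _))) (by positivity)
    _ = (Real.exp ((s:ℝ)+1) * Real.exp ((s:ℝ)+1)) * ((2*(d:ℝ))^s * (1/(20*(d:ℝ)))^(s+1)) := by
        ring
    _ ≤ (Real.exp ((s:ℝ)+1) * Real.exp ((s:ℝ)+1)) * (1/10)^(s+1) := by
        refine mul_le_mul_of_nonneg_left hfrac (by positivity)
    _ = (Real.exp 2)^(s+1) * (1/10)^(s+1) := by
        congr 1
        rw [← Real.exp_add, ← Real.exp_nat_mul]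
        congr 1
        push_cast
        ring
    _ = (Real.exp 2 / 10)^(s+1) := by
        rw [← mul_pow]
        congr 1
        ring

section Prob

variable {d : ℕ} {Ω Ω' : Type} [MeasurableSpace Ω] [MeasurableSpace Ω']

lemma meas_W (P' : Measure Ω') (h : Ω → Site d → ℝ) (η : Ω' → Site d → Bool) (K : ℝ)
    (hh : ∀ x, Measurable fun ω => h ω x) (hη : ∀ x, Measurable fun ω' => η ω' x)
    (x : Site d) :
    MeasurableSet {p : Ω × Ω' | omI K (h p.1) (η p.2) x = true} := by
  have heq : {p : Ω × Ω' | omI K (h p.1) (η p.2) x = true}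
      = {p : Ω × Ω' | |h p.1 x| ≤ K} ∪ ((fun p : Ω × Ω' => η p.2 x) ⁻¹' {true}) := by
    ext p
    simp only [Set.mem_setOf_eq, Set.mem_union, Set.mem_preimage, Set.mem_singleton_iff]
    exact omI_eq_true_iff K (h p.1) (η p.2) x
  rw [heq]
  refine MeasurableSet.union ?_ ?_
  · exact measurableSet_le ((hh x).comp measurable_fst).abs measurable_const
  · exact ((hη x).comp measurable_snd) (measurableSet_singleton true)

lemma meas_OT (P' : Measure Ω') (h : Ω → Site d → ℝ) (η : Ω' → Site d → Bool) (K : ℝ)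
    (hh : ∀ x, Measurable fun ω => h ω x) (hη : ∀ x, Measurable fun ω' => η ω' x)
    (T : Finset (Site d)) :
    MeasurableSet {p : Ω × Ω' | ∀ x ∈ T, omI K (h p.1) (η p.2) x = true} := by
  have heq : {p : Ω × Ω' | ∀ x ∈ T, omI K (h p.1) (η p.2) x = true}
      = ⋂ x ∈ T, {p : Ω × Ω' | omI K (h p.1) (η p.2) x = true} := by
    ext p
    simp [Set.mem_iInter]
  rw [heq]
  exact MeasurableSet.biInter T.countable_toSet fun x _ => meas_W P' h η K hh hη x

/-- probability that all of `T` is open, under the product measure -/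
lemma prob_allopen (P : Measure Ω) (P' : Measure Ω')
    [IsProbabilityMeasure P] [IsProbabilityMeasure P']
    (h : Ω → Site d → ℝ) (η : Ω' → Site d → Bool) (K : ℝ) (qb : ENNReal)
    (hIID : IIDAbsField P h)
    (hq : ∀ x, P {ω | |h ω x| ≤ K} ≤ qb)
    (hBmeas : ∀ x, Measurable fun ω' => η ω' x)
    (hBind : iIndepFun (fun x ω' => η ω' x) P')
    (hρ : ∀ x : Site d, P' {ω' | η ω' x = true} ≤ qb)
    (T : Finset (Site d)) :
    (P.prod P') {p : Ω × Ω' | ∀ x ∈ T, omI K (h p.1) (η p.2) x = true}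
      ≤ (qb + qb) ^ T.card := by
  classical
  set sets : Finset (Site d) → Site d → Set ℝ :=
    fun S x => if x ∈ S then Set.Iic K else (Set.Iic K)ᶜ with hsets
  set A : Finset (Site d) → Set Ω :=
    fun S => ⋂ x ∈ T, (fun ω => |h ω x|) ⁻¹' (sets S x) with hA
  set B : Finset (Site d) → Set Ω' :=
    fun S => ⋂ x ∈ T \ S, (fun ω' => η ω' x) ⁻¹' {true} with hB
  -- inclusion into union
  have hincl : {p : Ω × Ω' | ∀ x ∈ T, omI K (h p.1) (η p.2) x = true}
      ⊆ ⋃ S ∈ T.powerset, (A S) ×ˢ (B S) := by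
    intro p hp
    simp only [Set.mem_setOf_eq] at hp
    set S : Finset (Site d) := T.filter (fun x => |h p.1 x| ≤ K) with hS
    refine Set.mem_iUnion₂.2 ⟨S, Finset.mem_powerset.2 (Finset.filter_subset _ _), ?_⟩
    constructor
    · refine Set.mem_iInter₂.2 fun x hx => ?_
      simp only [Set.mem_preimage, hsets]
      by_cases hxS : x ∈ S
      · rw [if_pos hxS]
        exact (Finset.mem_filter.1 hxS).2
      · rw [if_neg hxS]
        intro hc
        exact hxS (Finset.mem_filter.2 ⟨hx, hc⟩)
    · refine Set.mem_iInter₂.2 fun x hx => ?_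
      rw [Finset.mem_sdiff] at hx
      have h1 := hp x hx.1
      rw [omI_eq_true_iff] at h1
      rcases h1 with h1 | h1
      · exact absurd (Finset.mem_filter.2 ⟨hx.1, h1⟩) hx.2
      · exact h1
  -- product formula bounds
  have hAle : ∀ S ∈ T.powerset, P (A S) ≤ qb ^ S.card := by
    intro S hSp
    rw [Finset.mem_powerset] at hSp
    have hsetsmeas : ∀ x ∈ T, MeasurableSet (sets S x) := by
      intro x _
      by_cases hx : x ∈ S <;> simp [hsets, hx, measurableSet_Iic, measurableSet_Iic.compl]
    have hprod := (iIndepFun_iff_measure_inter_preimage_eq_mul.mp hIID.2.1) T hsetsmeas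
    rw [hA]
    rw [hprod]
    calc ∏ x ∈ T, P ((fun ω => |h ω x|) ⁻¹' sets S x)
        ≤ ∏ x ∈ T, (if x ∈ S then qb else 1) := by
          refine Finset.prod_le_prod' fun x hx => ?_
          by_cases hxS : x ∈ S
          · rw [if_pos hxS]
            simp only [hsets, if_pos hxS]
            exact le_trans (le_of_eq (by congr 1)) (hq x)
          · rw [if_neg hxS]
            exact prob_le_one
      _ = qb ^ S.card := by
          rw [← Finset.prod_sdiff hSp]
          rw [Finset.prod_congr rfl (fun x hx => if_neg (Finset.mem_sdiff.1 hx).2),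
            Finset.prod_congr rfl (fun x (hx : x ∈ S) => if_pos hx)]
          simp
  have hBle : ∀ S : Finset (Site d), P' (B S) ≤ qb ^ (T \ S).card := by
    intro S
    have hprod := (iIndepFun_iff_measure_inter_preimage_eq_mul.mp hBind) (T \ S)
      (sets := fun _ => ({true} : Set Bool)) (fun x _ => measurableSet_singleton true)
    rw [hB]
    rw [hprod]
    calc ∏ x ∈ T \ S, P' ((fun ω' => η ω' x) ⁻¹' {true})
        ≤ ∏ _x ∈ T \ S, qb := by
          refine Finset.prod_le_prod' fun x _ => ?_
          exact le_trans (le_of_eq (by rfl)) (hρ x)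
      _ = qb ^ (T \ S).card := by simp
  -- assemble
  calc (P.prod P') {p : Ω × Ω' | ∀ x ∈ T, omI K (h p.1) (η p.2) x = true}
      ≤ (P.prod P') (⋃ S ∈ T.powerset, (A S) ×ˢ (B S)) := measure_mono hincl
    _ ≤ ∑ S ∈ T.powerset, (P.prod P') ((A S) ×ˢ (B S)) :=
        measure_biUnion_finset_le _ _
    _ ≤ ∑ S ∈ T.powerset, qb ^ S.card * qb ^ (T \ S).card := by
        refine Finset.sum_le_sum fun S hSp => ?_
        calc (P.prod P') ((A S) ×ˢ (B S)) ≤ P (A S) * P' (B S) :=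
              le_of_eq (MeasureTheory.Measure.prod_prod _ _)
          _ ≤ qb ^ S.card * qb ^ (T \ S).card :=
              mul_le_mul' (hAle S hSp) (hBle S)
    _ = (qb + qb) ^ T.card := by
        rw [← Finset.prod_const]
        rw [Finset.prod_add]
        refine Finset.sum_congr rfl fun S hS => ?_
        rw [Finset.prod_const, Finset.prod_const]

end Prob

section Prob2

variable {d : ℕ} {Ω Ω' : Type} [MeasurableSpace Ω] [MeasurableSpace Ω']

lemma per_pair (P : Measure Ω) (P' : Measure Ω')
    [IsProbabilityMeasure P] [IsProbabilityMeasure P']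
    (h : Ω → Site d → ℝ) (η : Ω' → Site d → Bool) (K : ℝ) (qb : ENNReal)
    (hIID : IIDAbsField P h)
    (hq : ∀ x, P {ω | |h ω x| ≤ K} ≤ qb)
    (hBmeas : ∀ x, Measurable fun ω' => η ω' x)
    (hBind : iIndepFun (fun x ω' => η ω' x) P')
    (hρ : ∀ x : Site d, P' {ω' | η ω' x = true} ≤ qb)
    (w : Site d) (r : ℕ) (hr : 1 ≤ r) :
    P {ω | ENNReal.ofReal (Real.exp (-(r:ℝ)))
        < P' {ω' | clusterAtLeast (omI K (h ω) (η ω')) w r}}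
      ≤ ENNReal.ofReal (Real.exp (r:ℝ)) * ((Animals d w r).card : ENNReal)
        * (qb + qb) ^ r := by
  classical
  set F : Set (Ω × Ω') :=
    ⋃ T ∈ Animals d w r, {p : Ω × Ω' | ∀ x ∈ T, omI K (h p.1) (η p.2) x = true} with hF
  have hFmeas : MeasurableSet F :=
    MeasurableSet.biUnion (Animals d w r).countable_toSet
      (fun T _ => meas_OT P' h η K hIID.1 hBmeas T)
  set g : Ω → ENNReal := fun ω => P' (Prod.mk ω ⁻¹' F) with hg
  have hgmeas : Measurable g := measurable_measure_prodMk_left hFmeas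
  set ε : ENNReal := ENNReal.ofReal (Real.exp (-(r:ℝ))) with hε
  have hsub : ∀ ω, {ω' | clusterAtLeast (omI K (h ω) (η ω')) w r} ⊆ Prod.mk ω ⁻¹' F := by
    intro ω ω' hω'
    obtain ⟨T, hTball, hTcard, hTconn, hTopen⟩ := extract_animal hr hω'
    refine Set.mem_iUnion₂.2 ⟨T, ?_, ?_⟩
    · rw [Animals, Finset.mem_filter, Finset.mem_powerset]
      exact ⟨hTball, hTcard, hTconn⟩
    · exact fun x hx => hTopen x hx
  have hset : {ω | ε < P' {ω' | clusterAtLeast (omI K (h ω) (η ω')) w r}}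
      ⊆ {ω | ε ≤ g ω} := by
    intro ω hω
    exact le_of_lt (lt_of_lt_of_le hω (measure_mono (hsub ω)))
  have hMarkov := mul_meas_ge_le_lintegral₀ (μ := P) hgmeas.aemeasurable ε
  have hεne : ε ≠ 0 := by
    rw [hε]
    simp [Real.exp_pos]
  have hεtop : ε ≠ ⊤ := ENNReal.ofReal_ne_top
  have hεinv : ε⁻¹ = ENNReal.ofReal (Real.exp (r:ℝ)) := by
    rw [hε, ← ENNReal.ofReal_inv_of_pos (Real.exp_pos _)]
    congr 1
    rw [← Real.exp_neg]
    ring_nf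
  have hlint : ∫⁻ ω, g ω ∂P = (P.prod P') F :=
    (MeasureTheory.Measure.prod_apply hFmeas).symm
  have hFle : (P.prod P') F ≤ ((Animals d w r).card : ENNReal) * (qb + qb) ^ r := by
    calc (P.prod P') F ≤ ∑ T ∈ Animals d w r,
          (P.prod P') {p : Ω × Ω' | ∀ x ∈ T, omI K (h p.1) (η p.2) x = true} :=
        measure_biUnion_finset_le _ _
      _ ≤ ∑ _T ∈ Animals d w r, (qb + qb) ^ r := by
          refine Finset.sum_le_sum fun T hT => ?_
          have hcard : T.card = r := by
            rw [Animals, Finset.mem_filter] at hT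
            exact hT.2.1
          rw [← hcard]
          exact prob_allopen P P' h η K qb hIID hq hBmeas hBind hρ T
      _ = ((Animals d w r).card : ENNReal) * (qb + qb) ^ r := by
          rw [Finset.sum_const, nsmul_eq_mul]
  calc P {ω | ε < P' {ω' | clusterAtLeast (omI K (h ω) (η ω')) w r}}
      ≤ P {ω | ε ≤ g ω} := measure_mono hset
    _ = ε⁻¹ * (ε * P {ω | ε ≤ g ω}) := by
        rw [← mul_assoc, ENNReal.inv_mul_cancel hεne hεtop, one_mul]
    _ ≤ ε⁻¹ * ((P.prod P') F) := by
        refine mul_le_mul_right ?_ _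
        rw [← hlint]
        exact hMarkov
    _ ≤ ENNReal.ofReal (Real.exp (r:ℝ))
        * (((Animals d w r).card : ENNReal) * (qb + qb) ^ r) := by
        rw [hεinv]
        exact mul_le_mul_right hFle _
    _ = _ := by rw [mul_assoc]

lemma per_pair_num (P : Measure Ω) (P' : Measure Ω')
    [IsProbabilityMeasure P] [IsProbabilityMeasure P']
    (h : Ω → Site d → ℝ) (η : Ω' → Site d → Bool) (K : ℝ)
    (hd : 1 ≤ d)
    (hIID : IIDAbsField P h)
    (hq : ∀ x, P {ω | |h ω x| ≤ K} ≤ ENNReal.ofReal (1/(40*(d:ℝ))))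
    (hBmeas : ∀ x, Measurable fun ω' => η ω' x)
    (hBind : iIndepFun (fun x ω' => η ω' x) P')
    (hρ : ∀ x : Site d, P' {ω' | η ω' x = true} ≤ ENNReal.ofReal (1/(40*(d:ℝ))))
    (w : Site d) (r : ℕ) (hr : 1 ≤ r) :
    P {ω | ENNReal.ofReal (Real.exp (-(r:ℝ)))
        < P' {ω' | clusterAtLeast (omI K (h ω) (η ω')) w r}}
      ≤ ENNReal.ofReal ((Real.exp 2 / 10) ^ r) := by
  have hDpos : (0:ℝ) < (d:ℝ) := by exact_mod_cast hd
  have h40 : (0:ℝ) ≤ 1/(40*(d:ℝ)) := by positivity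
  have hqb2 : ENNReal.ofReal (1/(40*(d:ℝ))) + ENNReal.ofReal (1/(40*(d:ℝ)))
      = ENNReal.ofReal (1/(20*(d:ℝ))) := by
    rw [← ENNReal.ofReal_add h40 h40]
    congr 1
    field_simp
    ring
  calc P {ω | ENNReal.ofReal (Real.exp (-(r:ℝ)))
        < P' {ω' | clusterAtLeast (omI K (h ω) (η ω')) w r}}
      ≤ ENNReal.ofReal (Real.exp (r:ℝ)) * ((Animals d w r).card : ENNReal)
        * (ENNReal.ofReal (1/(40*(d:ℝ))) + ENNReal.ofReal (1/(40*(d:ℝ)))) ^ r :=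
        per_pair P P' h η K _ hIID hq hBmeas hBind hρ w r hr
    _ ≤ ENNReal.ofReal (Real.exp (r:ℝ)) * (((r*(d*2)).choose (r-1) : ℕ) : ENNReal)
        * (ENNReal.ofReal (1/(20*(d:ℝ)))) ^ r := by
        rw [hqb2]
        refine mul_le_mul_left (mul_le_mul_right ?_ _) _
        exact_mod_cast animals_card_le w r hr
    _ = ENNReal.ofReal (Real.exp (r:ℝ) * (((r*(d*2)).choose (r-1) : ℕ) : ℝ)
        * (1/(20*(d:ℝ)))^r) := by
        rw [← ENNReal.ofReal_pow (by positivity),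
          ← ENNReal.ofReal_natCast (((r*(d*2)).choose (r-1) : ℕ)),
          ← ENNReal.ofReal_mul (by positivity), ← ENNReal.ofReal_mul (by positivity)]
    _ ≤ ENNReal.ofReal ((Real.exp 2 / 10) ^ r) := by
        refine ENNReal.ofReal_le_ofReal ?_
        exact real_core d r hd hr

end Prob2

lemma card_ball {d : ℕ} (o : Site d) (R : ℕ) : (ball o R).card = (2*R+1)^d := by
  unfold ball
  rw [Fintype.card_piFinset]
  have : ∀ i, (Finset.Icc (o i - (R:ℤ)) (o i + (R:ℤ))).card = 2*R+1 := by
    intro i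
    rw [Int.card_Icc]
    omega
  calc ∏ i : Fin d, (Finset.Icc (o i - (R:ℤ)) (o i + (R:ℤ))).card
      = ∏ _i : Fin d, (2*R+1) := Finset.prod_congr rfl fun i _ => this i
    _ = (2*R+1)^d := by
        rw [Finset.prod_const]
        simp

/-- numeric endgame -/
lemma final_numeric (d R : ℕ) (hd : 1 ≤ d) (hR3 : 3 ≤ R)
    (h3d : (3:ℝ)^d ≤ (R:ℝ))
    (hcR : Real.exp (((d:ℝ)+9)/(Real.log 10 - 2)) ≤ (R:ℝ)) :
    ((2*R+1:ℕ):ℝ)^d * ((R+1:ℕ):ℝ)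
      * Real.exp (-(Real.log 10 - 2) * (Real.log R)^2) ≤ 1/(R:ℝ)^5 := by
  set c : ℝ := Real.log 10 - 2 with hc
  have hexp2 : Real.exp 2 < 10 := by
    have h1 := Real.exp_one_lt_d9
    have h2 : Real.exp 2 = Real.exp 1 * Real.exp 1 := by
      rw [← Real.exp_add]; norm_num
    nlinarith [Real.exp_pos 1]
  have hcpos : 0 < c := by
    rw [hc]
    have : (2:ℝ) < Real.log 10 := by
      rw [Real.lt_log_iff_exp_lt (by norm_num)]
      exact hexp2
    linarith
  have hRpos : (0:ℝ) < (R:ℝ) := by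
    have : (3:ℝ) ≤ (R:ℝ) := by exact_mod_cast hR3
    linarith
  set L : ℝ := Real.log R with hL
  have hL1 : 1 ≤ L := by
    rw [hL, Real.le_log_iff_exp_le hRpos]
    have h1 := Real.exp_one_lt_d9
    have : (3:ℝ) ≤ (R:ℝ) := by exact_mod_cast hR3
    nlinarith
  have hL2 : ((d:ℝ)+9)/c ≤ L := by
    rw [hL, Real.le_log_iff_exp_le hRpos]
    exact hcR
  have hd9 : ((d:ℝ)+9) ≤ c * L := by
    rw [div_le_iff₀ hcpos] at hL2
    linarith [hL2]
  have hcL : ((d:ℝ)+8) * L ≤ c * L^2 := by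
    nlinarith [hL1, hd9]
  -- key bound
  have key : ((2*R+1:ℕ):ℝ)^d * ((R+1:ℕ):ℝ) * (R:ℝ)^5 ≤ Real.exp (c * L^2) := by
    have h1 : ((2*R+1:ℕ):ℝ) ≤ 3*(R:ℝ) := by
      push_cast
      have : (1:ℝ) ≤ (R:ℝ) := by exact_mod_cast le_trans (by norm_num) hR3
      linarith
    have h2 : ((2*R+1:ℕ):ℝ)^d ≤ (3*(R:ℝ))^d := by
      refine pow_le_pow_left₀ (by positivity) h1 d
    have h3 : (3*(R:ℝ))^d = (3:ℝ)^d * (R:ℝ)^d := by rw [mul_pow]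
    have h4 : (3:ℝ)^d * (R:ℝ)^d ≤ (R:ℝ)^(d+1) := by
      rw [pow_succ]
      calc (3:ℝ)^d * (R:ℝ)^d ≤ (R:ℝ) * (R:ℝ)^d := by
            refine mul_le_mul_of_nonneg_right h3d (by positivity)
        _ = (R:ℝ)^d * (R:ℝ) := by ring
    have h5 : ((R+1:ℕ):ℝ) ≤ (R:ℝ)^2 := by
      push_cast
      have : (3:ℝ) ≤ (R:ℝ) := by exact_mod_cast hR3
      nlinarith
    have h6 : ((2*R+1:ℕ):ℝ)^d * ((R+1:ℕ):ℝ) * (R:ℝ)^5 ≤ (R:ℝ)^(d+1) * (R:ℝ)^2 * (R:ℝ)^5 := by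
      have ha : (0:ℝ) ≤ ((2*R+1:ℕ):ℝ)^d := by positivity
      have hb : (0:ℝ) ≤ ((R+1:ℕ):ℝ) := by positivity
      refine mul_le_mul_of_nonneg_right ?_ (by positivity)
      refine mul_le_mul (le_trans h2 (le_trans (le_of_eq h3) h4)) h5 hb (by positivity)
    have h7 : (R:ℝ)^(d+1) * (R:ℝ)^2 * (R:ℝ)^5 = (R:ℝ)^(d+8) := by
      rw [← pow_add, ← pow_add]
    have h8 : (R:ℝ)^(d+8) = Real.exp (((d+8:ℕ):ℝ) * L) := by
      conv_lhs => rw [← Real.exp_log hRpos]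
      rw [← Real.exp_nat_mul]
    have h9 : Real.exp (((d+8:ℕ):ℝ) * L) ≤ Real.exp (c * L^2) := by
      refine Real.exp_le_exp.2 ?_
      push_cast
      exact hcL
    calc ((2*R+1:ℕ):ℝ)^d * ((R+1:ℕ):ℝ) * (R:ℝ)^5 ≤ (R:ℝ)^(d+1) * (R:ℝ)^2 * (R:ℝ)^5 := h6
      _ = (R:ℝ)^(d+8) := h7
      _ = Real.exp (((d+8:ℕ):ℝ) * L) := h8
      _ ≤ Real.exp (c * L^2) := h9
  have hepos : (0:ℝ) < Real.exp (c * L^2) := Real.exp_pos _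
  have h5pos : (0:ℝ) < (R:ℝ)^5 := by positivity
  calc ((2*R+1:ℕ):ℝ)^d * ((R+1:ℕ):ℝ) * Real.exp (-c * L^2)
      = (((2*R+1:ℕ):ℝ)^d * ((R+1:ℕ):ℝ)) / Real.exp (c * L^2) := by
        rw [neg_mul, Real.exp_neg]
        ring
    _ ≤ 1/(R:ℝ)^5 := by
        rw [div_le_div_iff₀ hepos h5pos]
        nlinarith [key]


/-- under the anti-concentration assumption, each coarse-graining vertex is
`Bad` with probability at most `R^{-5}`, for `R` at least a `d`-dependent constant. -/
theorem prob_bad_block_anti (d : ℕ) (hd : 2 ≤ d) :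
    ∃ R₀ : ℕ, ∀ (β : ℝ), 0 < β → ∀ (K : ℝ), 0 < K → rhoK d β K < 1 / (40 * d) →
      ∀ R : ℕ, R₀ ≤ R → ∀ n : ℕ,
      ∀ (Ω : Type) (_ : MeasurableSpace Ω) (P : Measure Ω) (_ : IsProbabilityMeasure P)
        (h : Ω → Site d → ℝ), IIDAbsField P h →
        (∀ x, P {ω | |h ω x| ≤ K} < ENNReal.ofReal (1 / (40 * d))) →
      ∀ (Ω' : Type) (_ : MeasurableSpace Ω') (P' : Measure Ω')
        (_ : IsProbabilityMeasure P') (η : Ω' → Site d → Bool),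
        BernoulliField P' η (rhoK d β K) →
      ∀ v ∈ coarse d n R,
        P {ω | ¬ GoodAnti n R K P' η (h ω) v} ≤ ENNReal.ofReal (1 / (R : ℝ) ^ 5) := by
  obtain ⟨M1, hM1⟩ := exists_nat_ge ((3:ℝ)^d)
  obtain ⟨M2, hM2⟩ := exists_nat_ge (Real.exp (((d:ℝ)+9)/(Real.log 10 - 2)))
  refine ⟨max 3 (max M1 M2), ?_⟩
  intro β hβ K hK hrho R hR n Ω _ P _ h hIID hq Ω' _ P' _ η hBer v _
  have hd1 : 1 ≤ d := by omega
  have hR3 : 3 ≤ R := le_trans (le_max_left _ _) hR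
  have hM1R : M1 ≤ R := le_trans (le_trans (le_max_left _ _) (le_max_right 3 _)) hR
  have hM2R : M2 ≤ R := le_trans (le_trans (le_max_right _ _) (le_max_right 3 _)) hR
  have h3dR : (3:ℝ)^d ≤ (R:ℝ) := le_trans hM1 (by exact_mod_cast hM1R)
  have hcR : Real.exp (((d:ℝ)+9)/(Real.log 10 - 2)) ≤ (R:ℝ) :=
    le_trans hM2 (by exact_mod_cast hM2R)
  have hRpos : (0:ℝ) < (R:ℝ) := by
    have : (3:ℝ) ≤ (R:ℝ) := by exact_mod_cast hR3
    linarith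
  have hL1 : 1 ≤ Real.log R := by
    rw [Real.le_log_iff_exp_le hRpos]
    have h1 := Real.exp_one_lt_d9
    have : (3:ℝ) ≤ (R:ℝ) := by exact_mod_cast hR3
    nlinarith
  have hlog10 : (2:ℝ) < Real.log 10 := by
    rw [Real.lt_log_iff_exp_lt (by norm_num)]
    have h1 := Real.exp_one_lt_d9
    have h2 : Real.exp 2 = Real.exp 1 * Real.exp 1 := by
      rw [← Real.exp_add]; norm_num
    nlinarith [Real.exp_pos 1]
  have hq' : ∀ x, P {ω | |h ω x| ≤ K} ≤ ENNReal.ofReal (1/(40*(d:ℝ))) := by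
    intro x
    exact le_of_lt (by exact_mod_cast hq x)
  have hρ' : ∀ x, P' {ω' | η ω' x = true} ≤ ENNReal.ofReal (1/(40*(d:ℝ))) := by
    intro x
    rw [hBer.2.2 x]
    refine ENNReal.ofReal_le_ofReal ?_
    exact_mod_cast le_of_lt hrho
  set W : Finset (Site d) := ball v R ∩ box d n with hW
  set I : Finset ℕ := (Finset.range (R+1)).filter (fun r => Real.log R ^ 2 ≤ (r:ℝ)) with hI
  set Bad : Site d → ℕ → Set Ω := fun w r =>
    {ω | ENNReal.ofReal (Real.exp (-(r:ℝ)))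
      < P' {ω' | clusterAtLeast (omI K (h ω) (η ω')) w r}} with hBad
  have hincl : {ω | ¬ GoodAnti n R K P' η (h ω) v} ⊆ ⋃ w ∈ W, ⋃ r ∈ I, Bad w r := by
    intro ω hω
    simp only [Set.mem_setOf_eq] at hω
    rw [GoodAnti] at hω
    push_neg at hω
    obtain ⟨w, hw, r, hr1, hr2, hr3⟩ := hω
    refine Set.mem_iUnion₂.2 ⟨w, hw, Set.mem_iUnion₂.2 ⟨r, ?_, hr3⟩⟩
    rw [hI, Finset.mem_filter, Finset.mem_range]
    refine ⟨?_, hr1⟩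
    have h8 : (r:ℝ) ≤ (R:ℝ) := le_trans hr2 (by linarith)
    have : r ≤ R := by exact_mod_cast h8
    omega
  have hrI : ∀ r ∈ I, 1 ≤ r := by
    intro r hr
    rw [hI, Finset.mem_filter] at hr
    have hsq : (1:ℝ) ≤ Real.log R ^ 2 := by nlinarith [hL1]
    have : (1:ℝ) ≤ (r:ℝ) := le_trans hsq hr.2
    exact_mod_cast this
  set t : ENNReal :=
    ENNReal.ofReal (Real.exp (-(Real.log 10 - 2) * (Real.log R)^2)) with ht
  have hterm : ∀ w, ∀ r ∈ I, P (Bad w r) ≤ t := by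
    intro w r hr
    have h1 := per_pair_num P P' h η K hd1 hIID hq' (hBer.1) (hBer.2.1) hρ' w r (hrI r hr)
    refine le_trans h1 (ENNReal.ofReal_le_ofReal ?_)
    have hθ : (Real.exp 2 / 10) = Real.exp (2 - Real.log 10) := by
      rw [Real.exp_sub, Real.exp_log (by norm_num : (0:ℝ) < 10)]
    rw [hθ, ← Real.exp_nat_mul]
    refine Real.exp_le_exp.2 ?_
    have hrge : Real.log R ^ 2 ≤ (r:ℝ) := (Finset.mem_filter.1 hr).2
    nlinarith [hrge, hlog10]
  have hWcard : W.card ≤ (2*R+1)^d := by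
    calc W.card ≤ (ball v R).card := Finset.card_le_card Finset.inter_subset_left
      _ = (2*R+1)^d := card_ball v R
  have hIcard : I.card ≤ R+1 := by
    calc I.card ≤ (Finset.range (R+1)).card := Finset.card_le_card (Finset.filter_subset _ _)
      _ = R+1 := Finset.card_range _
  calc P {ω | ¬ GoodAnti n R K P' η (h ω) v}
      ≤ P (⋃ w ∈ W, ⋃ r ∈ I, Bad w r) := measure_mono hincl
    _ ≤ ∑ w ∈ W, P (⋃ r ∈ I, Bad w r) := measure_biUnion_finset_le _ _
    _ ≤ ∑ w ∈ W, ∑ r ∈ I, P (Bad w r) :=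
        Finset.sum_le_sum fun w _ => measure_biUnion_finset_le _ _
    _ ≤ ∑ _w ∈ W, ∑ r ∈ I, t :=
        Finset.sum_le_sum fun w _ => Finset.sum_le_sum fun r hr => hterm w r hr
    _ = (W.card : ENNReal) * ((I.card : ENNReal) * t) := by
        rw [Finset.sum_const, Finset.sum_const, nsmul_eq_mul, nsmul_eq_mul]
    _ ≤ (((2*R+1)^d : ℕ) : ENNReal) * (((R+1 : ℕ) : ENNReal) * t) := by
        refine mul_le_mul' (by exact_mod_cast hWcard)
          (mul_le_mul' (by exact_mod_cast hIcard) le_rfl)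
    _ ≤ ENNReal.ofReal (1 / (R : ℝ) ^ 5) := by
        rw [ht, ← ENNReal.ofReal_natCast ((2*R+1)^d), ← ENNReal.ofReal_natCast (R+1),
          ← ENNReal.ofReal_mul (by positivity), ← ENNReal.ofReal_mul (by positivity)]
        refine ENNReal.ofReal_le_ofReal ?_
        have hfin := final_numeric d R hd1 hR3 h3dR hcR
        push_cast at hfin ⊢
        nlinarith [hfin]


end RFIM
end
end
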